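/- arXiv:2311.01758 — 6 statements merged into one kernel-verified Lean document; each statement's English description precedes it below -/
import Mathlib

section
/- Let Ω ⊆ ℝⁿ be a nonempty closed set and g: ℝⁿ → ℝ ∪ {+∞} a lower semicontinuous function such that Ω ∩ dom g is nonempty and unbounded, and suppose S := {x ∈ Ω : g(x) ≤ 0} is nonempty. If ∂^∞g(∞) ∩ (−N(∞;Ω)) = {0} and 0 ∉ ∂g(∞) + N(∞;Ω), then S has an error bound at infinity, i.e., there exist α > 0 and R > 0 such that d(x;S) ≤ α·max(g(x),0) for all x ∈ Ω with ‖x‖ > R. -/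
open Filter Topology Set Pointwise RealInnerProductSpace

noncomputable section

variable {E : Type*} [NormedAddCommGroup E] [InnerProductSpace ℝ E]

/-- The Fréchet (regular) normal cone to `Ω` at `x`:
`{v | limsup_{y→x, y∈Ω} ⟪v, y-x⟫/‖y-x‖ ≤ 0}`, empty if `x ∉ Ω`. -/
def FrechetNormalCone (Ω : Set E) (x : E) : Set E :=
  {v | x ∈ Ω ∧ ∀ ε > (0:ℝ), ∀ᶠ y in 𝓝[Ω] x, ⟪v, y - x⟫ ≤ ε * ‖y - x‖}

/-- The limiting (Mordukhovich) normal cone to `Ω` at `x`. -/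
def LimitingNormalCone (Ω : Set E) (x : E) : Set E :=
  {v | ∃ xs vs : ℕ → E, (∀ k, vs k ∈ FrechetNormalCone Ω (xs k)) ∧
    Tendsto xs atTop (𝓝 x) ∧ Tendsto vs atTop (𝓝 v)}

/-- The normal cone to an unbounded set `Ω` at infinity. -/
def NormalConeAtInfty (Ω : Set E) : Set E :=
  {v | ∃ xs vs : ℕ → E, (∀ k, vs k ∈ FrechetNormalCone Ω (xs k)) ∧
    Tendsto (fun k => ‖xs k‖) atTop atTop ∧ Tendsto vs atTop (𝓝 v)}

/-- The epigraph of `f : E → ℝ ∪ {+∞}` as a subset of the (ℓ²-)product `E × ℝ`. -/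
def epiSet (f : E → EReal) : Set (WithLp 2 (E × ℝ)) :=
  {p | f (WithLp.equiv 2 (E × ℝ) p).1 ≤ ((WithLp.equiv 2 (E × ℝ) p).2 : EReal)}

/-- The point `(x, t)` of the (ℓ²-)product `E × ℝ`. -/
def mkP (x : E) (t : ℝ) : WithLp 2 (E × ℝ) := (WithLp.equiv 2 (E × ℝ)).symm (x, t)

/-- `𝒩(f)`: limits of limiting normals to `epi f` at points `(x_k, f(x_k))` with `‖x_k‖ → ∞`. -/
def NclAtInfty (f : E → EReal) : Set (E × ℝ) :=
  {q | ∃ (xs : ℕ → E) (ws : ℕ → WithLp 2 (E × ℝ)),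
    (∀ k, f (xs k) ≠ ⊤) ∧
    Tendsto (fun k => ‖xs k‖) atTop atTop ∧
    (∀ k, ws k ∈ LimitingNormalCone (epiSet f) (mkP (xs k) (f (xs k)).toReal)) ∧
    Tendsto (fun k => WithLp.equiv 2 (E × ℝ) (ws k)) atTop (𝓝 q)}

/-- The limiting subdifferential of `f` at infinity: `∂f(∞) = {u | (u,-1) ∈ 𝒩(f)}`. -/
def subInfty (f : E → EReal) : Set E := {u | (u, (-1 : ℝ)) ∈ NclAtInfty f}

/-- The singular subdifferential of `f` at infinity: `∂^∞f(∞) = {u | (u,0) ∈ 𝒩(f)}`. -/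
def singSubInfty (f : E → EReal) : Set E := {u | (u, (0 : ℝ)) ∈ NclAtInfty f}

/-- The singular subdifferential of `f` at a point `x ∈ dom f`:
`∂^∞f(x) = {v | (v,0) ∈ N((x,f(x)); epi f)}`, empty if `x ∉ dom f`. -/
def singSub (f : E → EReal) (x : E) : Set E :=
  {v | f x ≠ ⊤ ∧ mkP v 0 ∈ LimitingNormalCone (epiSet f) (mkP x (f x).toReal)}

/-- `λ∘∂f(∞)`: equals `λ • ∂f(∞)` for `λ ≠ 0` and `∂^∞f(∞)` for `λ = 0`. -/
def lamCirc (f : E → EReal) (lam : ℝ) : Set E :=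
  if lam = 0 then singSubInfty f else lam • subInfty f

/-- `f` is Lipschitz at infinity. -/
def LipschitzAtInfty (f : E → ℝ) : Prop :=
  ∃ L > (0:ℝ), ∃ R > (0:ℝ), ∀ x x' : E, R < ‖x‖ → R < ‖x'‖ → |f x - f x'| ≤ L * ‖x - x'‖

end

set_option maxHeartbeats 1000000

noncomputable section AuxLemmas

variable {E : Type*} [NormedAddCommGroup E] [InnerProductSpace ℝ E]

lemma ereal_sub_helper {X : EReal} (hX : X ≠ ⊥) {A B : ℝ} (h : (A : EReal) ≤ X + (B : EReal)) :
    ((A - B : ℝ) : EReal) ≤ X := by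
  induction X with
  | bot => exact absurd rfl hX
  | coe x => rw [← EReal.coe_add] at h; exact_mod_cast (by linarith [(by exact_mod_cast h : A ≤ x + B)] : A - B ≤ x)
  | top => exact le_top

lemma ereal_real_extract {X : EReal} (hX0 : 0 ≤ X) {A M : ℝ} (h : X + (A : EReal) ≤ (M : EReal)) :
    X ≠ ⊤ ∧ X.toReal + A ≤ M := by
  induction X with
  | bot => simp at hX0
  | coe x =>
      rw [← EReal.coe_add] at h
      exact ⟨EReal.coe_ne_top x, by simpa using (by exact_mod_cast h : x + A ≤ M)⟩
  | top => rw [EReal.top_add_coe] at h; exact absurd h (by simp)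

lemma norm_sub_sq_expand (x p b : E) :
    ‖x - b‖ ^ 2 = ‖p - b‖ ^ 2 + 2 * ⟪p - b, x - p⟫ + ‖x - p‖ ^ 2 := by
  have h : x - b = (p - b) + (x - p) := by abel
  rw [h, norm_add_sq_real]

lemma ereal_toReal_nonneg {X : EReal} (h0 : 0 ≤ X) (htop : X ≠ ⊤) : 0 ≤ X.toReal := by
  simpa using EReal.toReal_le_toReal h0 (by simp) htop

lemma lsc_max_zero {g : E → EReal} (hg : LowerSemicontinuous g) :
    LowerSemicontinuous fun x => max (g x) 0 := by
  intro x y hy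
  rcases lt_max_iff.mp hy with h | h
  · exact (hg x y h).mono fun z hz => lt_max_iff.mpr (Or.inl hz)
  · exact Eventually.of_forall fun z => lt_max_iff.mpr (Or.inr h)
lemma lsc_exists_min_on_compact {α : Type*} [TopologicalSpace α] [T2Space α]
    {K : Set α} (hK : IsCompact K) (hne : K.Nonempty) {Φ : α → EReal}
    (hΦ : LowerSemicontinuous Φ) : ∃ z ∈ K, ∀ w ∈ K, Φ z ≤ Φ w := by
  have hKcl : IsClosed K := hK.isClosed
  obtain ⟨w0, hw0⟩ := hne
  haveI : Nonempty K := ⟨⟨w0, hw0⟩⟩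
  set t : K → Set α := fun i => {x ∈ K | Φ x ≤ Φ i} with ht
  have htcl : ∀ i, IsClosed (t i) := fun i => hKcl.inter (hΦ.isClosed_preimage (Φ i))
  have htK : ∀ i, t i ⊆ K := fun i x hx => hx.1
  have hmem : ∀ i : K, (i : α) ∈ t i := fun i => ⟨i.2, le_rfl⟩
  have hdir : Directed (· ⊇ ·) t := by
    intro i j
    rcases le_total (Φ i) (Φ j) with h | h
    · exact ⟨i, fun x hx => hx, fun x hx => ⟨hx.1, hx.2.trans h⟩⟩
    · exact ⟨j, fun x hx => ⟨hx.1, hx.2.trans h⟩, fun x hx => hx⟩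
  obtain ⟨z, hz⟩ := IsCompact.nonempty_iInter_of_directed_nonempty_isCompact_isClosed
    t hdir (fun i => ⟨i, hmem i⟩) (fun i => hK.of_isClosed_subset (htcl i) (htK i)) htcl
  simp only [Set.mem_iInter] at hz
  exact ⟨z, (hz ⟨w0, hw0⟩).1, fun w hw => (hz ⟨w, hw⟩).2⟩

lemma lsc_add_cont_real {α : Type*} [TopologicalSpace α] {F : α → EReal} (hF : LowerSemicontinuous F)
    {h : α → ℝ} (hh : Continuous h) : LowerSemicontinuous fun z => F z + (h z : EReal) := by
  refine hF.add' ?_ fun z => EReal.continuousAt_add (Or.inr (EReal.coe_ne_bot _)) (Or.inr (EReal.coe_ne_top _))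
  exact (continuous_coe_real_ereal.comp hh).lowerSemicontinuous

lemma zero_mem_fnc {Ω : Set E} {x : E} (hx : x ∈ Ω) : 0 ∈ FrechetNormalCone Ω x :=
  ⟨hx, fun ε hε => Eventually.of_forall fun y => by
    rw [inner_zero_left]; positivity⟩

lemma fnc_smul {Ω : Set E} {x v : E} {c : ℝ} (hc : 0 < c) (hv : v ∈ FrechetNormalCone Ω x) :
    c • v ∈ FrechetNormalCone Ω x := by
  refine ⟨hv.1, fun ε hε => ?_⟩
  filter_upwards [hv.2 (ε / c) (by positivity)] with y hy
  rw [real_inner_smul_left]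
  calc c * ⟪v, y - x⟫ ≤ c * (ε / c * ‖y - x‖) := by
        exact mul_le_mul_of_nonneg_left hy hc.le
    _ = ε * ‖y - x‖ := by field_simp

lemma fnc_smul_mkP {A : Set (WithLp 2 (E × ℝ))} {P : WithLp 2 (E × ℝ)} {v : E} {c : ℝ}
    (hc : 0 < c) (h : mkP v (-1) ∈ FrechetNormalCone A P) :
    mkP (c • v) (-c) ∈ FrechetNormalCone A P := by
  have h2 := fnc_smul hc h
  have heq : c • mkP v (-1) = mkP (c • v) (-c) := by
    show mkP (c • v) (c * (-1)) = mkP (c • v) (-c)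
    norm_num
  rwa [heq] at h2

lemma mem_fnc_of_quad {Ω : Set E} {x : E} (hx : x ∈ Ω) {w : E} {C : ℝ} (hC : 0 ≤ C)
    (h : ∀ᶠ y in 𝓝[Ω] x, 0 ≤ ⟪w, y - x⟫ + C * ‖y - x‖ ^ 2) :
    -w ∈ FrechetNormalCone Ω x := by
  refine ⟨hx, fun ε hε => ?_⟩
  have hball : ∀ᶠ y in 𝓝[Ω] x, dist y x < ε / (C + 1) :=
    eventually_nhdsWithin_of_eventually_nhds
      (Metric.eventually_nhds_iff_ball.mpr ⟨ε / (C + 1), by positivity, fun y hy => hy⟩)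
  filter_upwards [h, hball] with y hy hb
  rw [inner_neg_left]
  have hn : ‖y - x‖ = dist y x := (dist_eq_norm y x).symm
  have h1 : -⟪w, y - x⟫ ≤ C * ‖y - x‖ ^ 2 := by linarith
  have h2 : C * ‖y - x‖ ^ 2 ≤ ε * ‖y - x‖ := by
    have hnn : (0:ℝ) ≤ ‖y - x‖ := norm_nonneg _
    have h4 : ‖y - x‖ < ε / (C + 1) := by rw [hn]; exact hb
    have h3 : ‖y - x‖ * (C + 1) < ε := (lt_div_iff₀ (by positivity)).mp h4
    nlinarith [mul_le_mul_of_nonneg_right h3.le hnn, mul_nonneg hC hnn]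
  linarith

lemma norm_fst_le_mkP (a : E) (s : ℝ) : ‖a‖ ≤ ‖mkP a s‖ := by
  have h := WithLp.prod_norm_sq_eq_of_L2 (mkP a s)
  have h1 : (mkP a s).fst = a := rfl
  have h2 : (mkP a s).snd = s := rfl
  rw [h1, h2] at h
  nlinarith [norm_nonneg (mkP a s), norm_nonneg a, sq_nonneg s, norm_nonneg s]

lemma abs_snd_le_mkP (a : E) (s : ℝ) : |s| ≤ ‖mkP a s‖ := by
  have h := WithLp.prod_norm_sq_eq_of_L2 (mkP a s)
  have h1 : (mkP a s).fst = a := rfl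
  have h2 : (mkP a s).snd = s := rfl
  rw [h1, h2] at h
  have : ‖s‖ ≤ ‖mkP a s‖ := by nlinarith [norm_nonneg (mkP a s), norm_nonneg a, norm_nonneg s]
  simpa using this

lemma inner_mkP (a b : E) (s t : ℝ) : ⟪mkP a s, mkP b t⟫ = ⟪a, b⟫ + s * t := by
  rw [WithLp.prod_inner_apply]; norm_num [RCLike.inner_apply]; show ⟪a, b⟫ + t * s = ⟪a, b⟫ + s * t; ring

lemma mem_fnc_epi {g : E → EReal} {p : E} (hgp : 0 < g p) (hgtop : g p ≠ ⊤)
    {w : E} {C r : ℝ} (hC : 0 ≤ C) (hr : 0 < r)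
    (hmin : ∀ y : E, ‖y - p‖ < r →
      (((g p).toReal - ⟪w, y - p⟫ - C * ‖y - p‖ ^ 2 : ℝ) : EReal) ≤ max (g y) 0) :
    mkP (-w) (-1) ∈ FrechetNormalCone (epiSet g) (mkP p (g p).toReal) := by
  have hgbot : g p ≠ ⊥ := fun h => by simp [h] at hgp
  have hgcoe : ((g p).toReal : EReal) = g p := EReal.coe_toReal hgtop hgbot
  set gp := (g p).toReal with hgp'
  have hgpos : 0 < gp := by
    rw [← hgcoe] at hgp; exact_mod_cast hgp
  have hq0 : mkP p gp ∈ epiSet g := by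
    show g p ≤ ((gp : ℝ) : EReal)
    rw [hgcoe]
  refine ⟨hq0, fun ε hε => ?_⟩
  set δ := min r (min gp (ε / (C + 1))) with hδ
  have hδpos : 0 < δ := by
    refine lt_min hr (lt_min hgpos (by positivity))
  have hball : ∀ᶠ z in 𝓝[epiSet g] (mkP p gp), dist z (mkP p gp) < δ :=
    eventually_nhdsWithin_of_eventually_nhds
      (Metric.eventually_nhds_iff_ball.mpr ⟨δ, hδpos, fun y hy => hy⟩)
  filter_upwards [hball, eventually_mem_nhdsWithin] with z hz hzepi
  set a := z.fst with ha
  set s := z.snd with hs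
  have hzeq : z = mkP a s := rfl
  have hdiff : z - mkP p gp = mkP (a - p) (s - gp) := rfl
  have hnorm : ‖z - mkP p gp‖ = dist z (mkP p gp) := (dist_eq_norm _ _).symm
  have hap : ‖a - p‖ ≤ ‖z - mkP p gp‖ := by rw [hdiff]; exact norm_fst_le_mkP _ _
  have hsp : |s - gp| ≤ ‖z - mkP p gp‖ := by rw [hdiff]; exact abs_snd_le_mkP _ _
  have hdd : ‖z - mkP p gp‖ < δ := by rw [hnorm]; exact hz
  have hapr : ‖a - p‖ < r := lt_of_le_of_lt hap (hdd.trans_le (min_le_left _ _))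
  have hspos : 0 < s := by
    have h1 : |s - gp| < gp := lt_of_le_of_lt hsp
      (hdd.trans_le ((min_le_right _ _).trans (min_le_left _ _)))
    have := abs_lt.mp h1
    linarith
  have hga : g a ≤ (s : EReal) := hzepi
  have hineq : gp - ⟪w, a - p⟫ - C * ‖a - p‖ ^ 2 ≤ s := by
    have h1 := hmin a hapr
    have h2 : max (g a) 0 ≤ ((s : ℝ) : EReal) := max_le hga (by exact_mod_cast hspos.le)
    exact_mod_cast h1.trans h2
  have hinner : ⟪mkP (-w) (-1), z - mkP p gp⟫ = -⟪w, a - p⟫ - (s - gp) := by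
    rw [hdiff, inner_mkP, inner_neg_left]; ring
  rw [hinner]
  have hC2 : C * ‖a - p‖ ^ 2 ≤ C * ‖z - mkP p gp‖ ^ 2 :=
    mul_le_mul_of_nonneg_left (by nlinarith [norm_nonneg (a - p)]) hC
  have hd3 : ‖z - mkP p gp‖ < ε / (C + 1) :=
    hdd.trans_le ((min_le_right _ _).trans (min_le_right _ _))
  have h3 : ‖z - mkP p gp‖ * (C + 1) < ε := (lt_div_iff₀ (by positivity)).mp hd3
  have hnn : (0:ℝ) ≤ ‖z - mkP p gp‖ := norm_nonneg _
  nlinarith [mul_le_mul_of_nonneg_right h3.le hnn, mul_nonneg hC hnn]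

lemma fuzzy [FiniteDimensional ℝ E] {Ω : Set E} (hΩcl : IsClosed Ω)
    {g : E → EReal} (hg : LowerSemicontinuous g)
    {u a : E} (hu : u ∈ Ω) {c r : ℝ} (hc : 0 ≤ c) (hr : 0 < r)
    (hgu_pos : 0 < g u) (hgu_top : g u ≠ ⊤)
    (hmin : ∀ y ∈ Ω, ‖y - u‖ ≤ r →
      max (g u) 0 + ((c * ‖u - a‖ ^ 2 : ℝ) : EReal) ≤ max (g y) 0 + ((c * ‖y - a‖ ^ 2 : ℝ) : EReal))
    {δ : ℝ} (hδ : 0 < δ) :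
    ∃ p q ξ η, ‖p - u‖ ≤ δ ∧ ‖q - u‖ ≤ δ ∧ g p ≠ ⊤ ∧ 0 < g p ∧
      mkP ξ (-1) ∈ FrechetNormalCone (epiSet g) (mkP p (g p).toReal) ∧
      η ∈ FrechetNormalCone Ω q ∧ ‖ξ + η + (2 * c) • (u - a)‖ ≤ δ := by
  classical
  set F : E → EReal := fun x => max (g x) 0 with hF
  have hFlsc : LowerSemicontinuous F := lsc_max_zero hg
  have hF0 : ∀ x, 0 ≤ F x := fun x => le_max_right _ _
  have hFbot : ∀ x, F x ≠ ⊥ := fun x h => by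
    have := hF0 x; rw [h] at this; exact absurd this (by simp)
  have hgu_bot : g u ≠ ⊥ := fun h => by simp [h] at hgu_pos
  have hFu : F u = g u := max_eq_left hgu_pos.le
  set gu := (g u).toReal with hgu
  have hgucoe : (gu : EReal) = g u := EReal.coe_toReal hgu_top hgu_bot
  have hgupos : (0:ℝ) < gu := by
    have : ((0:ℝ):EReal) < (gu : EReal) := by rw [hgucoe]; exact_mod_cast hgu_pos
    exact_mod_cast this
  set M : ℝ := gu + c * ‖u - a‖ ^ 2 with hM
  set K : Set (E × E) := (Metric.closedBall u r) ×ˢ (Ω ∩ Metric.closedBall u r) with hK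
  have hKcomp : IsCompact K :=
    (isCompact_closedBall u r).prod ((isCompact_closedBall u r).inter_left hΩcl)
  have huK : (u, u) ∈ K := ⟨Metric.mem_closedBall_self hr.le,
    hu, Metric.mem_closedBall_self hr.le⟩
  set Φ : ℕ → E × E → EReal := fun m z =>
    F z.1 + ((c * ‖z.2 - a‖ ^ 2 + ((m:ℝ)/2) * ‖z.1 - z.2‖ ^ 2 + ‖z.1 - u‖ ^ 2 : ℝ) : EReal)
    with hΦ
  have hex : ∀ m : ℕ, ∃ z ∈ K, ∀ w ∈ K, Φ m z ≤ Φ m w := by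
    intro m
    apply lsc_exists_min_on_compact hKcomp ⟨(u,u), huK⟩
    apply lsc_add_cont_real (hFlsc.comp continuous_fst)
    fun_prop
  choose z hzK hzmin using hex
  set p : ℕ → E := fun m => (z m).1 with hp
  set q : ℕ → E := fun m => (z m).2 with hq
  have hpK : ∀ m, p m ∈ Metric.closedBall u r := fun m => (hzK m).1
  have hqΩ : ∀ m, q m ∈ Ω := fun m => (hzK m).2.1
  have hqK : ∀ m, q m ∈ Metric.closedBall u r := fun m => (hzK m).2.2
  have hval : ∀ m, F (p m) +
      ((c * ‖q m - a‖ ^ 2 + ((m:ℝ)/2) * ‖p m - q m‖ ^ 2 + ‖p m - u‖ ^ 2 : ℝ) : EReal)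
      ≤ ((M:ℝ) : EReal) := by
    intro m
    have h := hzmin m (u,u) huK
    have hRHS : Φ m (u,u) = ((M:ℝ) : EReal) := by
      simp only [hΦ, sub_self, norm_zero]
      rw [hFu, ← hgucoe, ← EReal.coe_add]
      norm_num [hM]
    rw [hRHS] at h
    exact h
  have hkey : ∀ m, F (p m) ≠ ⊤ ∧ (F (p m)).toReal +
      (c * ‖q m - a‖ ^ 2 + ((m:ℝ)/2) * ‖p m - q m‖ ^ 2 + ‖p m - u‖ ^ 2) ≤ M :=
    fun m => ereal_real_extract (hF0 _) (hval m)
  have hFtop : ∀ m, F (p m) ≠ ⊤ := fun m => (hkey m).1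
  set Fp : ℕ → ℝ := fun m => (F (p m)).toReal with hFp
  have hFpnn : ∀ m, 0 ≤ Fp m := fun m => ereal_toReal_nonneg (hF0 _) (hFtop m)
  have hFpcoe : ∀ m, ((Fp m : ℝ) : EReal) = F (p m) :=
    fun m => EReal.coe_toReal (hFtop m) (hFbot _)
  -- distance between the two points goes to 0
  have hdist2 : ∀ m : ℕ, ((m:ℝ)/2) * ‖p m - q m‖ ^ 2 ≤ M := by
    intro m
    have h := (hkey m).2
    nlinarith [hFpnn m, mul_nonneg hc (sq_nonneg ‖q m - a‖), sq_nonneg ‖p m - u‖]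
  have hsq0 : Tendsto (fun m => ‖p m - q m‖ ^ 2) atTop (𝓝 0) := by
    apply squeeze_zero' (Eventually.of_forall fun m => sq_nonneg _)
      (?_ : ∀ᶠ m : ℕ in atTop, ‖p m - q m‖ ^ 2 ≤ 2 * M / (m:ℝ))
      (tendsto_const_div_atTop_nhds_zero_nat (2 * M))
    filter_upwards [eventually_ge_atTop 1] with m hm
    have hmpos : (0:ℝ) < (m:ℝ) := by exact_mod_cast hm
    rw [le_div_iff₀ hmpos]
    have := hdist2 m
    nlinarith
  have hd0 : Tendsto (fun m => ‖p m - q m‖) atTop (𝓝 0) := by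
    have heq : (fun m => ‖p m - q m‖) = fun m => Real.sqrt (‖p m - q m‖ ^ 2) :=
      funext fun m => (Real.sqrt_sq (norm_nonneg _)).symm
    rw [heq]
    have := (Real.continuous_sqrt.continuousAt (x := (0:ℝ))).tendsto.comp hsq0
    simpa [Function.comp_def] using this
  -- extract a convergent subsequence
  obtain ⟨xb, hxbmem, φ, hφ, hφtend⟩ :=
    tendsto_subseq_of_bounded Metric.isBounded_closedBall hpK
  have hφat : Tendsto φ atTop atTop := hφ.tendsto_atTop
  have hq_tend : Tendsto (fun j => q (φ j)) atTop (𝓝 xb) := by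
    have h1 : Tendsto (fun j => p (φ j) - q (φ j)) atTop (𝓝 0) := by
      rw [tendsto_zero_iff_norm_tendsto_zero]
      exact hd0.comp hφat
    have h2 := Tendsto.sub hφtend h1
    simpa using h2
  have hxbΩ : xb ∈ Ω ∩ Metric.closedBall u r :=
    (hΩcl.inter Metric.isClosed_closedBall).mem_of_tendsto hq_tend
      (Eventually.of_forall fun j => ⟨hqΩ _, hqK _⟩)
  -- show the cluster point is u
  set A : ℝ := c * ‖xb - a‖ ^ 2 + ‖xb - u‖ ^ 2 with hA
  have hcont1 : Tendsto (fun j => c * ‖q (φ j) - a‖ ^ 2 + ‖p (φ j) - u‖ ^ 2) atTop (𝓝 A) := by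
    have t1 : Tendsto (fun j => ‖q (φ j) - a‖) atTop (𝓝 ‖xb - a‖) :=
      ((hq_tend.sub tendsto_const_nhds).norm)
    have t2 : Tendsto (fun j => ‖p (φ j) - u‖) atTop (𝓝 ‖xb - u‖) :=
      (((hφtend.comp tendsto_id).sub tendsto_const_nhds).norm)
    exact ((t1.pow 2).const_mul c).add (t2.pow 2)
  have hb_bound : ∀ b : ℝ, (b:EReal) < F xb → b + A ≤ M := by
    intro b hb
    have hev : ∀ᶠ j in atTop, (b:EReal) < F (p (φ j)) := hφtend.eventually (hFlsc xb b hb)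
    have hev2 : ∀ᶠ j in atTop, b + (c * ‖q (φ j) - a‖ ^ 2 + ‖p (φ j) - u‖ ^ 2) ≤ M := by
      filter_upwards [hev] with j hj
      have hk := (hkey (φ j)).2
      have hbF : b ≤ Fp (φ j) := by
        have hlt : (b:EReal) < ((Fp (φ j) : ℝ) : EReal) := by rw [hFpcoe]; exact hj
        exact_mod_cast hlt.le
      nlinarith [mul_nonneg (by positivity : (0:ℝ) ≤ ((φ j : ℕ):ℝ)/2) (sq_nonneg ‖p (φ j) - q (φ j)‖)]
    exact le_of_tendsto (tendsto_const_nhds.add hcont1) hev2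
  have hFxb_top : F xb ≠ ⊤ := by
    intro h
    have := hb_bound (M - A + 1) (by rw [h]; exact EReal.coe_lt_top _)
    linarith
  set Fxb := (F xb).toReal with hFxb
  have hFxbcoe : ((Fxb : ℝ) : EReal) = F xb := EReal.coe_toReal hFxb_top (hFbot _)
  have hFxbineq : Fxb + A ≤ M := by
    by_contra hcon
    push_neg at hcon
    have h1 : ((M - A + Fxb)/2 : ℝ) < Fxb := by linarith
    have h2 : (((M - A + Fxb)/2 : ℝ) : EReal) < F xb := by
      rw [← hFxbcoe]; exact_mod_cast h1
    have := hb_bound _ h2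
    linarith
  have hxbu : xb = u := by
    have hball : ‖xb - u‖ ≤ r := by
      have := hxbΩ.2
      rwa [Metric.mem_closedBall, dist_eq_norm] at this
    have hminxb := hmin xb hxbΩ.1 hball
    have hlhs : max (g u) 0 + ((c * ‖u - a‖ ^ 2 : ℝ) : EReal) = ((M:ℝ) : EReal) := by
      rw [show max (g u) 0 = F u from rfl, hFu, ← hgucoe, ← EReal.coe_add, hM]
    have hrhs : max (g xb) 0 + ((c * ‖xb - a‖ ^ 2 : ℝ) : EReal)
        = ((Fxb + c * ‖xb - a‖ ^ 2 : ℝ) : EReal) := by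
      rw [show max (g xb) 0 = F xb from rfl, ← hFxbcoe, ← EReal.coe_add]
    rw [hlhs, hrhs] at hminxb
    have h2 : M ≤ Fxb + c * ‖xb - a‖ ^ 2 := by exact_mod_cast hminxb
    have h3 : ‖xb - u‖ ^ 2 ≤ 0 := by rw [hA] at hFxbineq; linarith
    have h4 : ‖xb - u‖ = 0 := by nlinarith [norm_nonneg (xb - u)]
    exact sub_eq_zero.mp (norm_eq_zero.mp h4)
  rw [hxbu] at hφtend hq_tend
  -- choose a good index
  set ε1 : ℝ := min (min δ (r/2)) (δ/(2*(1+c))) with hε1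
  have hε1pos : 0 < ε1 := by
    apply lt_min (lt_min hδ (by linarith)); positivity
  have hev1 : ∀ᶠ j in atTop, ‖p (φ j) - u‖ < ε1 :=
    hφtend.eventually (Metric.eventually_nhds_iff_ball.mpr
      ⟨ε1, hε1pos, fun y hy => by rwa [Metric.mem_ball, dist_eq_norm] at hy⟩)
  have hevq : ∀ᶠ j in atTop, ‖q (φ j) - u‖ < ε1 :=
    hq_tend.eventually (Metric.eventually_nhds_iff_ball.mpr
      ⟨ε1, hε1pos, fun y hy => by rwa [Metric.mem_ball, dist_eq_norm] at hy⟩)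
  have hevg : ∀ᶠ j in atTop, ((gu/2 : ℝ) : EReal) < g (p (φ j)) := by
    refine hφtend.eventually (hg u ((gu/2 : ℝ) : EReal) ?_)
    show ((gu/2 : ℝ) : EReal) < g u
    rw [← hgucoe]
    exact_mod_cast (by linarith : gu/2 < gu)
  obtain ⟨j, hj1, hjq, hjg⟩ := ((hev1.and (hevq.and hevg)).exists.imp
    (fun j h => ⟨h.1, h.2.1, h.2.2⟩) : ∃ j, ‖p (φ j) - u‖ < ε1 ∧ ‖q (φ j) - u‖ < ε1 ∧ ((gu/2 : ℝ) : EReal) < g (p (φ j)))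
  set m := φ j with hm
  set pp := p m with hpp
  set qq := q m with hqq
  have hppu : ‖pp - u‖ < ε1 := hj1
  have hqqu : ‖qq - u‖ < ε1 := hjq
  have hε1r : ε1 ≤ r/2 := le_trans (min_le_left _ _) (min_le_right _ _)
  have hε1δ : ε1 ≤ δ := le_trans (min_le_left _ _) (min_le_left _ _)
  have hε1c : ε1 ≤ δ/(2*(1+c)) := min_le_right _ _
  have hppur : ‖pp - u‖ < r := lt_of_lt_of_le hppu (by linarith)
  have hqqur : ‖qq - u‖ < r := lt_of_lt_of_le hqqu (by linarith)
  -- positivity and finiteness of g at pp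
  have hgpp_pos : 0 < g pp := by
    refine lt_trans ?_ hjg
    exact_mod_cast (by positivity : (0:ℝ) < gu/2)
  have hgpp_top : g pp ≠ ⊤ := by
    intro h
    exact hFtop m (by show max (g pp) 0 = ⊤; simp [h])
  have hgpp_bot : g pp ≠ ⊥ := fun h => by simp [h] at hgpp_pos
  have hFpp : F pp = g pp := max_eq_left hgpp_pos.le
  set gpp := (g pp).toReal with hgpp
  have hgppcoe : ((gpp : ℝ) : EReal) = g pp := EReal.coe_toReal hgpp_top hgpp_bot
  -- epigraph normal at pp
  set w1 : E := (m:ℝ) • (pp - qq) + (2:ℝ) • (pp - u) with hw1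
  have hξ : mkP (-w1) (-1) ∈ FrechetNormalCone (epiSet g) (mkP pp gpp) := by
    apply mem_fnc_epi hgpp_pos hgpp_top (C := (m:ℝ)/2 + 1) (r := r - ‖pp - u‖)
      (by positivity) (by linarith)
    intro y hy
    have hyball : y ∈ Metric.closedBall u r := by
      rw [Metric.mem_closedBall, dist_eq_norm]
      calc ‖y - u‖ = ‖(y - pp) + (pp - u)‖ := by congr 1; abel
        _ ≤ ‖y - pp‖ + ‖pp - u‖ := norm_add_le _ _
        _ ≤ r := by linarith
    have hmin2 : F pp + ((c * ‖qq - a‖ ^ 2 + ((m:ℝ)/2) * ‖pp - qq‖ ^ 2 + ‖pp - u‖ ^ 2 : ℝ) : EReal)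
        ≤ F y + ((c * ‖qq - a‖ ^ 2 + ((m:ℝ)/2) * ‖y - qq‖ ^ 2 + ‖y - u‖ ^ 2 : ℝ) : EReal) :=
      hzmin m (y, qq) ⟨hyball, hqΩ m, hqK m⟩
    have hsub : ((gpp + (c * ‖qq - a‖ ^ 2 + ((m:ℝ)/2) * ‖pp - qq‖ ^ 2 + ‖pp - u‖ ^ 2)
        - (c * ‖qq - a‖ ^ 2 + ((m:ℝ)/2) * ‖y - qq‖ ^ 2 + ‖y - u‖ ^ 2) : ℝ) : EReal)
        ≤ F y := by
      apply ereal_sub_helper (hFbot y)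
      rw [EReal.coe_add, hgppcoe, ← hFpp]
      exact hmin2
    refine le_trans ?_ hsub
    apply EReal.coe_le_coe_iff.mpr
    have e1 : ‖y - qq‖ ^ 2 = ‖pp - qq‖ ^ 2 + 2*⟪pp - qq, y - pp⟫ + ‖y - pp‖ ^ 2 :=
      norm_sub_sq_expand y pp qq
    have e2 : ‖y - u‖ ^ 2 = ‖pp - u‖ ^ 2 + 2*⟪pp - u, y - pp⟫ + ‖y - pp‖ ^ 2 :=
      norm_sub_sq_expand y pp u
    have einner : ⟪w1, y - pp⟫ = (m:ℝ)*⟪pp - qq, y - pp⟫ + 2*⟪pp - u, y - pp⟫ := by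
      rw [hw1, inner_add_left, real_inner_smul_left, real_inner_smul_left]
    rw [e1, e2, einner]
    ring_nf
    linarith [sq_nonneg ‖y - pp‖]
  -- normal cone to Ω at qq
  set w2 : E := (2*c) • (qq - a) + (m:ℝ) • (qq - pp) with hw2
  have hη : -w2 ∈ FrechetNormalCone Ω qq := by
    apply mem_fnc_of_quad (hqΩ m) (C := c + (m:ℝ)/2) (by positivity)
    have hball : ∀ᶠ y in 𝓝[Ω] qq, dist y qq < r - ‖qq - u‖ :=
      eventually_nhdsWithin_of_eventually_nhds
        (Metric.eventually_nhds_iff_ball.mpr ⟨_, by linarith, fun y hy => hy⟩)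
    filter_upwards [hball, eventually_mem_nhdsWithin] with y hy hyΩ
    have hyball : y ∈ Metric.closedBall u r := by
      rw [Metric.mem_closedBall, dist_eq_norm]
      rw [dist_eq_norm] at hy
      calc ‖y - u‖ = ‖(y - qq) + (qq - u)‖ := by congr 1; abel
        _ ≤ ‖y - qq‖ + ‖qq - u‖ := norm_add_le _ _
        _ ≤ r := by linarith
    have hmin2 : F pp + ((c * ‖qq - a‖ ^ 2 + ((m:ℝ)/2) * ‖pp - qq‖ ^ 2 + ‖pp - u‖ ^ 2 : ℝ) : EReal)
        ≤ F pp + ((c * ‖y - a‖ ^ 2 + ((m:ℝ)/2) * ‖pp - y‖ ^ 2 + ‖pp - u‖ ^ 2 : ℝ) : EReal) :=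
      hzmin m (pp, y) ⟨hpK m, hyΩ, hyball⟩
    rw [show F pp = ((gpp:ℝ):EReal) from by rw [hgppcoe]; exact hFpp] at hmin2
    rw [← EReal.coe_add, ← EReal.coe_add] at hmin2
    have hreal : gpp + (c * ‖qq - a‖ ^ 2 + ((m:ℝ)/2) * ‖pp - qq‖ ^ 2 + ‖pp - u‖ ^ 2)
        ≤ gpp + (c * ‖y - a‖ ^ 2 + ((m:ℝ)/2) * ‖pp - y‖ ^ 2 + ‖pp - u‖ ^ 2) := by
      exact_mod_cast hmin2
    have e1 : ‖y - a‖ ^ 2 = ‖qq - a‖ ^ 2 + 2*⟪qq - a, y - qq⟫ + ‖y - qq‖ ^ 2 :=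
      norm_sub_sq_expand y qq a
    have e2 : ‖pp - y‖ ^ 2 = ‖qq - pp‖ ^ 2 + 2*⟪qq - pp, y - qq⟫ + ‖y - qq‖ ^ 2 := by
      rw [← norm_neg (pp - y), show -(pp - y) = y - pp from by abel]
      exact norm_sub_sq_expand y qq pp
    have einner : ⟪w2, y - qq⟫ = (2*c)*⟪qq - a, y - qq⟫ + (m:ℝ)*⟪qq - pp, y - qq⟫ := by
      rw [hw2, inner_add_left, real_inner_smul_left, real_inner_smul_left]
    rw [einner]
    rw [e1, e2] at hreal
    have hppqq : ‖pp - qq‖ = ‖qq - pp‖ := norm_sub_rev pp qq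
    rw [hppqq] at hreal
    nlinarith [sq_nonneg ‖y - qq‖]
  refine ⟨pp, qq, -w1, -w2, hppu.le.trans hε1δ, hqqu.le.trans hε1δ, hgpp_top, hgpp_pos, hξ, hη, ?_⟩
  have hvec : -w1 + -w2 + (2*c) • (u - a) = -((2:ℝ) • (pp - u) + (2*c) • (qq - u)) := by
    rw [hw1, hw2]; module
  rw [hvec, norm_neg]
  calc ‖(2:ℝ) • (pp - u) + (2*c) • (qq - u)‖
      ≤ ‖(2:ℝ) • (pp - u)‖ + ‖(2*c) • (qq - u)‖ := norm_add_le _ _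
    _ = 2*‖pp - u‖ + (2*c)*‖qq - u‖ := by
        rw [norm_smul, norm_smul, Real.norm_eq_abs, Real.norm_eq_abs,
          abs_of_nonneg (by norm_num : (0:ℝ) ≤ 2), abs_of_nonneg (by positivity : (0:ℝ) ≤ 2*c)]
    _ ≤ δ := by
        have h1 : 2*(1+c)*ε1 ≤ δ := by
          calc 2*(1+c)*ε1 ≤ 2*(1+c)*(δ/(2*(1+c))) :=
                mul_le_mul_of_nonneg_left hε1c (by positivity : (0:ℝ) ≤ 2*(1+c))
            _ = δ := by field_simp
        nlinarith [hppu.le, hqqu.le, hε1pos.le,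
          mul_le_mul_of_nonneg_left hqqu.le (by positivity : (0:ℝ) ≤ 2*c)]

end AuxLemmas

noncomputable section AuxMain

variable {E : Type*} [NormedAddCommGroup E] [InnerProductSpace ℝ E]

lemma fnc_subset_lnc {Ω : Set E} {x v : E} (h : v ∈ FrechetNormalCone Ω x) :
    v ∈ LimitingNormalCone Ω x :=
  ⟨fun _ => x, fun _ => v, fun _ => h, tendsto_const_nhds, tendsto_const_nhds⟩

end AuxMain


/-- Theorem 3.2: sufficient conditions for an error bound at infinity
for `S = {x ∈ Ω : g(x) ≤ 0}`. -/
theorem error_bound_at_infinity {n : ℕ} (Ω : Set (EuclideanSpace ℝ (Fin n)))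
    (g : EuclideanSpace ℝ (Fin n) → EReal)
    (hΩne : Ω.Nonempty) (hΩcl : IsClosed Ω)
    (hg : LowerSemicontinuous g) (hgbot : ∀ x, g x ≠ ⊥)
    (hdomne : (Ω ∩ {x | g x ≠ ⊤}).Nonempty)
    (hdomunbdd : ¬ Bornology.IsBounded (Ω ∩ {x | g x ≠ ⊤}))
    (S : Set (EuclideanSpace ℝ (Fin n))) (hS : S = {x ∈ Ω | g x ≤ 0})
    (hSne : S.Nonempty)
    (hCQ : singSubInfty g ∩ (-(NormalConeAtInfty Ω)) = {0})
    (hreg : (0 : EuclideanSpace ℝ (Fin n)) ∉ subInfty g + NormalConeAtInfty Ω) :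
    ∃ α > (0:ℝ), ∃ R > (0:ℝ), ∀ x ∈ Ω, R < ‖x‖ →
      (Metric.infDist x S : EReal) ≤ (α : EReal) * max (g x) 0 := by
  classical
  by_contra hcon
  push_neg at hcon
  obtain ⟨s0, hs0⟩ := hSne
  -- Step 1: for each k, produce approximate stationary data far from the origin
  have main : ∀ k : ℕ, ∃ pp qq ξ η : EuclideanSpace ℝ (Fin n),
      g pp ≠ ⊤ ∧ 0 < g pp ∧
      ((k:ℝ) + 1 - ‖s0‖)/2 - 1 ≤ ‖pp‖ ∧ ((k:ℝ) + 1 - ‖s0‖)/2 - 1 ≤ ‖qq‖ ∧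
      mkP ξ (-1) ∈ FrechetNormalCone (epiSet g) (mkP pp (g pp).toReal) ∧
      η ∈ FrechetNormalCone Ω qq ∧
      ‖ξ + η‖ ≤ 5/((k:ℝ)+1) := by
    intro k
    set α : ℝ := (k:ℝ) + 1 with hα'
    have hα : (0:ℝ) < α := by positivity
    obtain ⟨x, hxΩ, hxR, hxlt⟩ := hcon α hα α hα
    set d := Metric.infDist x S with hd
    have hmaxtop : max (g x) 0 ≠ ⊤ := by
      intro h
      rw [h, EReal.mul_top_of_pos (by exact_mod_cast hα : (0:EReal) < (α:EReal))] at hxlt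
      exact not_top_lt hxlt
    have hmax0 : (0:EReal) ≤ max (g x) 0 := le_max_right _ _
    set G := (max (g x) 0).toReal with hG
    have hGcoe : ((G:ℝ):EReal) = max (g x) 0 :=
      EReal.coe_toReal hmaxtop (fun h => by rw [h] at hmax0; simp at hmax0)
    have hGnn : 0 ≤ G := ereal_toReal_nonneg hmax0 hmaxtop
    have hreal : α * G < d := by
      rw [← hGcoe, ← EReal.coe_mul] at hxlt
      exact_mod_cast hxlt
    have hxS : x ∉ S := by
      intro hxs
      have h0 : d = 0 := Metric.infDist_zero_of_mem hxs
      nlinarith [mul_nonneg hα.le hGnn]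
    have hgx_pos : 0 < g x := by
      by_contra hle
      push_neg at hle
      exact hxS (hS ▸ ⟨hxΩ, hle⟩)
    have hgx_top : g x ≠ ⊤ := fun h => hmaxtop (by simp [h])
    have hGpos : 0 < G := by
      have h1 : ((0:ℝ):EReal) < ((G:ℝ):EReal) := by
        rw [hGcoe]; exact lt_max_iff.mpr (Or.inl hgx_pos)
      exact_mod_cast h1
    have hdpos : 0 < d := lt_of_le_of_lt (mul_nonneg hα.le hGnn) hreal
    set c : ℝ := 4/(α*d) with hc
    have hcpos : 0 < c := by positivity
    -- minimize  max(g,0) + c‖·-x‖²  over Ω ∩ B̄(x, d/2)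
    have hK1comp : IsCompact (Ω ∩ Metric.closedBall x (d/2)) :=
      (isCompact_closedBall x (d/2)).inter_left hΩcl
    have hxK1 : x ∈ Ω ∩ Metric.closedBall x (d/2) :=
      ⟨hxΩ, Metric.mem_closedBall_self (by linarith)⟩
    obtain ⟨uu, huuK, huumin⟩ := lsc_exists_min_on_compact hK1comp ⟨x, hxK1⟩
      (Φ := fun y => max (g y) 0 + ((c * ‖y - x‖^2 : ℝ) : EReal))
      (lsc_add_cont_real (lsc_max_zero hg) (by fun_prop))
    have hvx := huumin x hxK1
    have hvalx : max (g x) 0 + ((c * ‖x - x‖^2 : ℝ) : EReal) = ((G:ℝ):EReal) := by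
      rw [← hGcoe]; simp
    rw [hvalx] at hvx
    obtain ⟨hFuutop, hFuureal⟩ := ereal_real_extract (le_max_right _ _) hvx
    have hFuunn : 0 ≤ (max (g uu) 0).toReal := ereal_toReal_nonneg (le_max_right _ _) hFuutop
    have huux_lt : ‖uu - x‖ < d/2 := by
      have h2 : c * ‖uu - x‖^2 ≤ G := by nlinarith
      have hGd : G < d/α := (lt_div_iff₀ hα).mpr (by nlinarith)
      have h3 : ‖uu - x‖^2 < d^2/4 := by
        have h4 : c * ‖uu - x‖^2 < d/α := lt_of_le_of_lt h2 hGd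
        have h5 : ‖uu - x‖^2 < (d/α)/c := by
          rw [lt_div_iff₀ hcpos, mul_comm]; exact h4
        have h6 : (d/α)/c = d^2/4 := by rw [hc]; field_simp
        rwa [h6] at h5
      nlinarith [norm_nonneg (uu - x)]
    have huuΩ : uu ∈ Ω := huuK.1
    have huuS : uu ∉ S := by
      intro h
      have h1 : d ≤ dist x uu := Metric.infDist_le_dist_of_mem h
      rw [dist_eq_norm, ← norm_neg (x - uu), show -(x - uu) = uu - x from by abel] at h1
      linarith
    have hguu_pos : 0 < g uu := by
      by_contra hle
      push_neg at hle
      exact huuS (hS ▸ ⟨huuΩ, hle⟩)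
    have hguu_top : g uu ≠ ⊤ := fun h => hFuutop (by simp [h])
    set r0 : ℝ := d/2 - ‖uu - x‖ with hr0
    have hr0pos : 0 < r0 := by rw [hr0]; linarith
    have hminuu : ∀ y ∈ Ω, ‖y - uu‖ ≤ r0 →
        max (g uu) 0 + ((c * ‖uu - x‖^2 : ℝ) : EReal)
          ≤ max (g y) 0 + ((c * ‖y - x‖^2 : ℝ) : EReal) := by
      intro y hyΩ hyr
      refine huumin y ⟨hyΩ, ?_⟩
      rw [Metric.mem_closedBall, dist_eq_norm]
      calc ‖y - x‖ = ‖(y - uu) + (uu - x)‖ := by congr 1; abel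
        _ ≤ ‖y - uu‖ + ‖uu - x‖ := norm_add_le _ _
        _ ≤ d/2 := by rw [hr0] at hyr; linarith
    obtain ⟨pp, qq, ξ, η, hb1, hb2, hb3, hb4, hb5, hb6, hb7⟩ :=
      fuzzy hΩcl hg huuΩ hcpos.le hr0pos hguu_pos hguu_top hminuu
        (δ := min 1 (1/α)) (lt_min one_pos (by positivity))
    have hd_le : d ≤ ‖x‖ + ‖s0‖ := by
      have h1 : d ≤ dist x s0 := Metric.infDist_le_dist_of_mem hs0
      rw [dist_eq_norm] at h1
      exact h1.trans (norm_sub_le _ _)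
    have hmin1 : min 1 (1/α) ≤ 1 := min_le_left _ _
    have hmin2 : min 1 (1/α) ≤ 1/α := min_le_right _ _
    have hppn : ((k:ℝ) + 1 - ‖s0‖)/2 - 1 ≤ ‖pp‖ := by
      have t1 : ‖uu‖ - ‖pp‖ ≤ ‖uu - pp‖ := norm_sub_norm_le _ _
      have t1' : ‖uu - pp‖ = ‖pp - uu‖ := norm_sub_rev _ _
      have t2 : ‖x‖ - ‖uu‖ ≤ ‖x - uu‖ := norm_sub_norm_le _ _
      have t2' : ‖x - uu‖ = ‖uu - x‖ := norm_sub_rev _ _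
      linarith [hb1, huux_lt, hd_le, hxR, hmin1, hα']
    have hqqn : ((k:ℝ) + 1 - ‖s0‖)/2 - 1 ≤ ‖qq‖ := by
      have t1 : ‖uu‖ - ‖qq‖ ≤ ‖uu - qq‖ := norm_sub_norm_le _ _
      have t1' : ‖uu - qq‖ = ‖qq - uu‖ := norm_sub_rev _ _
      have t2 : ‖x‖ - ‖uu‖ ≤ ‖x - uu‖ := norm_sub_norm_le _ _
      have t2' : ‖x - uu‖ = ‖uu - x‖ := norm_sub_rev _ _
      linarith [hb2, huux_lt, hd_le, hxR, hmin1, hα']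
    refine ⟨pp, qq, ξ, η, hb3, hb4, hppn, hqqn, hb5, hb6, ?_⟩
    have hv : ‖(2*c) • (uu - x)‖ ≤ 4/α := by
      rw [norm_smul, Real.norm_eq_abs, abs_of_nonneg (by positivity : (0:ℝ) ≤ 2*c)]
      have : 2*c*‖uu - x‖ ≤ 2*c*(d/2) := by nlinarith
      have hcd : 2*c*(d/2) = 4/α := by rw [hc]; field_simp
      linarith
    have htri : ‖ξ + η‖ ≤ ‖ξ + η + (2*c) • (uu - x)‖ + ‖(2*c) • (uu - x)‖ := by
      calc ‖ξ + η‖ = ‖(ξ + η + (2*c) • (uu - x)) + (-((2*c) • (uu - x)))‖ := by congr 1; abel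
        _ ≤ ‖ξ + η + (2*c) • (uu - x)‖ + ‖-((2*c) • (uu - x))‖ := norm_add_le _ _
        _ = ‖ξ + η + (2*c) • (uu - x)‖ + ‖(2*c) • (uu - x)‖ := by rw [norm_neg]
    calc ‖ξ + η‖ ≤ ‖ξ + η + (2*c) • (uu - x)‖ + ‖(2*c) • (uu - x)‖ := htri
      _ ≤ min 1 (1/α) + 4/α := add_le_add hb7 hv
      _ ≤ 1/α + 4/α := by linarith
      _ = 5/((k:ℝ)+1) := by rw [hα']; ring
  choose pp qq ξ η hgt hgp hnp hnq hξm hηm hsum using main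
  -- the lower bound sequence tends to infinity
  have hlow : Tendsto (fun k : ℕ => ((k:ℝ) + 1 - ‖s0‖)/2 - 1) atTop atTop := by
    have h1 : Tendsto (fun k : ℕ => (k:ℝ)) atTop atTop := tendsto_natCast_atTop_atTop
    have h2 := tendsto_atTop_add_const_right atTop (1 - ‖s0‖) h1
    have h3 := h2.atTop_div_const (by norm_num : (0:ℝ) < 2)
    have h4 := tendsto_atTop_add_const_right atTop (-1 : ℝ) h3
    exact h4.congr fun k => by ring
  have hpp_inf : Tendsto (fun k => ‖pp k‖) atTop atTop := tendsto_atTop_mono hnp hlow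
  have hqq_inf : Tendsto (fun k => ‖qq k‖) atTop atTop := tendsto_atTop_mono hnq hlow
  have hsum0 : Tendsto (fun k => ξ k + η k) atTop (𝓝 0) := by
    rw [tendsto_zero_iff_norm_tendsto_zero]
    apply squeeze_zero (fun k => norm_nonneg _) hsum
    have h := (tendsto_const_div_atTop_nhds_zero_nat (5:ℝ)).comp (tendsto_add_atTop_nat 1)
    exact Tendsto.congr (fun t => by simp only [Function.comp_apply]; push_cast; ring) h
  by_cases hbdd : ∃ C, ∀ k, ‖ξ k‖ ≤ C
  · -- bounded case: contradiction with hreg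
    obtain ⟨C, hC⟩ := hbdd
    obtain ⟨ξb, hξbmem, ψ, hψ, hψtend⟩ :=
      tendsto_subseq_of_bounded (Metric.isBounded_closedBall (x := (0:EuclideanSpace ℝ (Fin n))) (r := C))
        (fun k => mem_closedBall_zero_iff.mpr (hC k))
    have hψat : Tendsto ψ atTop atTop := hψ.tendsto_atTop
    have hηtend : Tendsto (fun j => η (ψ j)) atTop (𝓝 (-ξb)) := by
      have h := (hsum0.comp hψat).sub hψtend
      simpa using h
    have hmem1 : ξb ∈ subInfty g := by
      refine ⟨fun j => pp (ψ j), fun j => mkP (ξ (ψ j)) (-1), fun j => hgt _,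
        hpp_inf.comp hψat, fun j => fnc_subset_lnc (hξm (ψ j)), ?_⟩
      exact hψtend.prodMk_nhds tendsto_const_nhds
    have hmem2 : -ξb ∈ NormalConeAtInfty Ω :=
      ⟨fun j => qq (ψ j), fun j => η (ψ j), fun j => hηm (ψ j), hqq_inf.comp hψat, hηtend⟩
    apply hreg
    have h := Set.add_mem_add hmem1 hmem2
    simpa using h
  · -- unbounded case: contradiction with hCQ
    push_neg at hbdd
    have hbig : ∀ j : ℕ, ∃ i, j ≤ i ∧ (j:ℝ) + 1 ≤ ‖ξ i‖ := by
      intro j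
      by_contra hno
      push_neg at hno
      obtain ⟨B, hB⟩ : ∃ B, ∀ i < j, ‖ξ i‖ ≤ B := by
        clear hno
        induction j with
        | zero => exact ⟨0, fun i hi => absurd hi (Nat.not_lt_zero i)⟩
        | succ m ih =>
            obtain ⟨B, hB⟩ := ih
            refine ⟨max B ‖ξ m‖, fun i hi => ?_⟩
            rcases Nat.lt_succ_iff_lt_or_eq.mp hi with h | h
            · exact (hB i h).trans (le_max_left _ _)
            · rw [h]; exact le_max_right _ _
      obtain ⟨i, hi⟩ := hbdd (max B ((j:ℝ) + 1))
      rcases lt_or_ge i j with h | h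
      · exact absurd ((hB i h).trans (le_max_left _ _)) (not_le.mpr hi)
      · exact absurd ((hno i h).le.trans (le_max_right _ _)) (not_le.mpr hi)
    choose ρ hρ1 hρ2 using hbig
    have hρat : Tendsto ρ atTop atTop := tendsto_atTop_mono hρ1 tendsto_id
    have hξρpos : ∀ j, (0:ℝ) < ‖ξ (ρ j)‖ :=
      fun j => lt_of_lt_of_le (by positivity) (hρ2 j)
    set ζ : ℕ → EuclideanSpace ℝ (Fin n) := fun j => ‖ξ (ρ j)‖⁻¹ • ξ (ρ j) with hζ
    have hζ1 : ∀ j, ‖ζ j‖ = 1 := by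
      intro j
      rw [hζ]
      simp only
      rw [norm_smul, Real.norm_eq_abs, abs_of_nonneg (by positivity)]
      exact inv_mul_cancel₀ (ne_of_gt (hξρpos j))
    obtain ⟨ζb, hζmem, ψ, hψ, hψtend⟩ :=
      tendsto_subseq_of_bounded (Metric.isBounded_closedBall (x := (0:EuclideanSpace ℝ (Fin n))) (r := 1))
        (fun j => mem_closedBall_zero_iff.mpr (hζ1 j).le)
    have hψat : Tendsto ψ atTop atTop := hψ.tendsto_atTop
    have hζbnorm : ‖ζb‖ = 1 := by
      have h1 : Tendsto (fun j => ‖ζ (ψ j)‖) atTop (𝓝 ‖ζb‖) := hψtend.norm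
      have h2 : Tendsto (fun j => ‖ζ (ψ j)‖) atTop (𝓝 1) := by
        simp only [hζ1]; exact tendsto_const_nhds
      exact tendsto_nhds_unique h1 h2
    have hnorminf : Tendsto (fun j => ‖ξ (ρ (ψ j))‖) atTop atTop := by
      have hb : ∀ j : ℕ, ((j:ℝ) + 1) ≤ ‖ξ (ρ (ψ j))‖ := fun j =>
        le_trans (add_le_add (Nat.cast_le.mpr hψ.le_apply) le_rfl) (hρ2 (ψ j))
      exact tendsto_atTop_mono hb
        (tendsto_atTop_add_const_right atTop 1 tendsto_natCast_atTop_atTop)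
    have hinv0 : Tendsto (fun j => ‖ξ (ρ (ψ j))‖⁻¹) atTop (𝓝 0) :=
      tendsto_inv_atTop_zero.comp hnorminf
    have key1 : ζb ∈ singSubInfty g := by
      refine ⟨fun j => pp (ρ (ψ j)), fun j => mkP (ζ (ψ j)) (-(‖ξ (ρ (ψ j))‖⁻¹)),
        fun j => hgt _, hpp_inf.comp (hρat.comp hψat), fun j => fnc_subset_lnc ?_, ?_⟩
      · exact fnc_smul_mkP (inv_pos.mpr (hξρpos _)) (hξm _)
      · refine hψtend.prodMk_nhds ?_
        simpa using hinv0.neg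
    have key2 : ζb ∈ -(NormalConeAtInfty Ω) := by
      rw [Set.mem_neg]
      refine ⟨fun j => qq (ρ (ψ j)), fun j => ‖ξ (ρ (ψ j))‖⁻¹ • η (ρ (ψ j)),
        fun j => fnc_smul (inv_pos.mpr (hξρpos _)) (hηm _),
        hqq_inf.comp (hρat.comp hψat), ?_⟩
      have hb : Tendsto (fun j => ‖ξ (ρ (ψ j))‖⁻¹ • (ξ (ρ (ψ j)) + η (ρ (ψ j)))) atTop (𝓝 0) := by
        rw [tendsto_zero_iff_norm_tendsto_zero]
        apply squeeze_zero (fun _ => norm_nonneg _)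
          (g := fun j => ‖ξ (ρ (ψ j)) + η (ρ (ψ j))‖)
        · intro j
          rw [norm_smul, Real.norm_eq_abs, abs_of_nonneg (by positivity)]
          have h1 : (1:ℝ) ≤ ‖ξ (ρ (ψ j))‖ := le_trans (by norm_num : (1:ℝ) ≤ (ψ j:ℝ)+1) (hρ2 _)
          have h2 : ‖ξ (ρ (ψ j))‖⁻¹ ≤ 1 := by
            rw [inv_le_one_iff₀]; right; exact h1
          nlinarith [norm_nonneg (ξ (ρ (ψ j)) + η (ρ (ψ j)))]
        · have h := (hsum0.comp (hρat.comp hψat)).norm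
          simpa using h
      have heq : (fun j => ‖ξ (ρ (ψ j))‖⁻¹ • η (ρ (ψ j)))
          = fun j => ‖ξ (ρ (ψ j))‖⁻¹ • (ξ (ρ (ψ j)) + η (ρ (ψ j))) - ζ (ψ j) := by
        funext j
        rw [smul_add, hζ]
        abel
      rw [heq]
      have h := hb.sub hψtend
      simpa using h
    have hin : ζb ∈ singSubInfty g ∩ (-(NormalConeAtInfty Ω)) := ⟨key1, key2⟩
    rw [hCQ, Set.mem_singleton_iff] at hin
    rw [hin] at hζbnorm
    norm_num at hζbnorm
end

section
/- Let g: ℝ² → ℝ be given by g(x,y) = x² + y². Then the limiting subdifferential of g at infinity is empty: ∂g(∞) = ∅. -/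
open Filter Topology Set Pointwise RealInnerProductSpace

section AuxProof

variable {E : Type*} [NormedAddCommGroup E] [InnerProductSpace ℝ E]

set_option linter.unusedSectionVars false

private lemma nonpos_of_small {A C : ℝ} (h : ∀ ε : ℝ, 0 < ε → ε ≤ 1 → A ≤ ε * C) : A ≤ 0 := by
  by_contra hA
  push_neg at hA
  have h1 : A ≤ C := by simpa using h 1 one_pos le_rfl
  have hC : 0 < C := lt_of_lt_of_le hA h1
  have hε : 0 < min 1 (A / (2 * C)) := lt_min one_pos (by positivity)
  have h2 := h _ hε (min_le_left _ _)
  have h3 : min 1 (A / (2 * C)) * C ≤ (A / (2 * C)) * C :=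
    mul_le_mul_of_nonneg_right (min_le_right _ _) hC.le
  have h4 : (A / (2 * C)) * C = A / 2 := by field_simp
  linarith

private lemma mkP_fst (a : E) (b : ℝ) : (mkP a b).fst = a := rfl
private lemma mkP_snd (a : E) (b : ℝ) : (mkP a b).snd = b := rfl
private lemma mkP_eta (q : WithLp 2 (E × ℝ)) : mkP q.fst q.snd = q := rfl
private lemma mkP_sub (a c : E) (b d : ℝ) : mkP a b - mkP c d = mkP (a - c) (b - d) := rfl

private lemma mkP_inner (v : WithLp 2 (E × ℝ)) (a : E) (b : ℝ) :
    ⟪v, mkP a b⟫ = ⟪v.fst, a⟫ + v.snd * b := by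
  rw [WithLp.prod_inner_apply]
  simp [mkP, RCLike.inner_apply]
  ring

private lemma mkP_norm_le (a : E) (b : ℝ) : ‖mkP a b‖ ≤ ‖a‖ + |b| := by
  rw [WithLp.prod_norm_eq_of_L2]
  have h1 : ‖(mkP a b).fst‖ ^ 2 + ‖(mkP a b).snd‖ ^ 2 ≤ (‖a‖ + |b|) ^ 2 := by
    rw [mkP_fst, mkP_snd, Real.norm_eq_abs]
    nlinarith [norm_nonneg a, abs_nonneg b]
  calc Real.sqrt (‖(mkP a b).fst‖ ^ 2 + ‖(mkP a b).snd‖ ^ 2)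
      ≤ Real.sqrt ((‖a‖ + |b|) ^ 2) := Real.sqrt_le_sqrt h1
    _ = ‖a‖ + |b| := Real.sqrt_sq (by positivity)

private lemma mem_epiSet_sq {a : E} {b : ℝ} (h : ‖a‖ ^ 2 ≤ b) :
    mkP a b ∈ epiSet (fun z : E => ((‖z‖ ^ 2 : ℝ) : EReal)) := by
  simpa [epiSet, mkP] using (EReal.coe_le_coe_iff.mpr h)

private lemma tendsto_mkP {ι : Type*} {l : Filter ι} {as : ι → E} {bs : ι → ℝ} {a : E} {b : ℝ}
    (ha : Filter.Tendsto as l (𝓝 a)) (hb : Filter.Tendsto bs l (𝓝 b)) :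
    Filter.Tendsto (fun i => mkP (as i) (bs i)) l (𝓝 (mkP a b)) := by
  have hpc : Filter.Tendsto (fun i => (as i, bs i)) l (𝓝 (a, b)) := ha.prodMk_nhds hb
  exact ((WithLp.prod_continuous_toLp (p := 2) (α := E) (β := ℝ)).tendsto _).comp hpc

private lemma frechet_key {p v : WithLp 2 (E × ℝ)}
    (hv : v ∈ FrechetNormalCone (epiSet (fun z : E => ((‖z‖ ^ 2 : ℝ) : EReal))) p) :
    v.snd ≤ 0 ∧ 2 * (-v.snd) * ‖p.fst‖ ≤ ‖v.fst‖ := by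
  obtain ⟨hmem, hev⟩ := hv
  set Ω := epiSet (fun z : E => ((‖z‖ ^ 2 : ℝ) : EReal)) with hΩ
  set x := p.fst
  set t := p.snd
  have hp : p = mkP x t := (mkP_eta p).symm
  have ht : ‖x‖ ^ 2 ≤ t := by
    have := hmem
    rw [hΩ, epiSet, Set.mem_setOf_eq] at this
    exact_mod_cast this
  have hδ : Filter.Tendsto (fun j : ℕ => (1 : ℝ) / (j + 1)) Filter.atTop (𝓝 0) :=
    tendsto_one_div_add_atTop_nhds_zero_nat
  have hδpos : ∀ j : ℕ, 0 < (1 : ℝ) / (j + 1) := fun j => by positivity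
  set s := v.snd
  -- Part 1 : s ≤ 0
  have hs : s ≤ 0 := by
    apply nonpos_of_small (C := 1)
    intro ε hε _
    have hys : Filter.Tendsto (fun j : ℕ => mkP x (t + 1 / (j + 1))) Filter.atTop (𝓝[Ω] p) := by
      rw [tendsto_nhdsWithin_iff]
      constructor
      · rw [hp]
        exact tendsto_mkP tendsto_const_nhds (by simpa using tendsto_const_nhds.add hδ)
      · exact Filter.Eventually.of_forall fun j =>
          mem_epiSet_sq (le_trans ht (by linarith [hδpos j]))
    obtain ⟨j, hj⟩ := (hys.eventually (hev ε hε)).exists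
    rw [hp, mkP_sub, sub_self, mkP_inner, add_sub_cancel_left] at hj
    simp only [inner_zero_right, zero_add] at hj
    have hnj : ‖mkP (0 : E) ((1 : ℝ) / (j + 1))‖ = 1 / (j + 1) := by
      simp [mkP]
      positivity
    rw [hnj] at hj
    have := le_of_mul_le_mul_right hj (hδpos j)
    simpa using this
  refine ⟨hs, ?_⟩
  -- Part 2
  rcases eq_or_ne x 0 with hx0 | hx0
  · simp [hx0]
  · set r := ‖x‖ with hr_def
    have hr : 0 < r := norm_pos_iff.mpr hx0
    set ip := (⟪v.fst, x⟫ : ℝ) with hip_def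
    have key2 : 2 * (-s) * r * r ≤ ip := by
      have hA : -ip - 2 * s * r ^ 2 ≤ 0 := by
        apply nonpos_of_small (C := r * (2 + 2 * r) + |s| * r)
        intro ε hε hε1
        set ys : ℕ → WithLp 2 (E × ℝ) := fun j =>
          mkP ((1 - (1 / (j + 1)) / r) • x) (t - 2 * (1 / (j + 1)) * r + (1 / (j + 1)) ^ 2)
          with hys_def
        have hysmem : ∀ j, ys j ∈ Ω := by
          intro j
          apply mem_epiSet_sq
          have hnrm : ‖(1 - (1 / (j + 1 : ℝ)) / r) • x‖ ^ 2
              = r ^ 2 - 2 * (1 / (j + 1)) * r + (1 / (j + 1)) ^ 2 := by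
            rw [norm_smul, Real.norm_eq_abs, mul_pow, sq_abs, ← hr_def]
            field_simp
            ring
          rw [hnrm]
          linarith
        have hystend : Filter.Tendsto ys Filter.atTop (𝓝[Ω] p) := by
          rw [tendsto_nhdsWithin_iff]
          refine ⟨?_, Filter.Eventually.of_forall hysmem⟩
          rw [hp]
          apply tendsto_mkP
          · have h1 : Filter.Tendsto (fun j : ℕ => (1 - (1 / (j + 1 : ℝ)) / r)) Filter.atTop
                (𝓝 1) := by
              have := (hδ.div_const r).const_sub 1
              simpa using this
            have := h1.smul (tendsto_const_nhds (x := x))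
            simpa using this
          · have h2 := ((hδ.const_mul 2).mul_const r).const_sub t
            have h3 := hδ.pow (n := 2)
            have := h2.add h3
            simpa using this
        have hsmall : ∀ᶠ j : ℕ in Filter.atTop, (1 : ℝ) / (j + 1) < ε :=
          hδ.eventually_lt_const hε
        obtain ⟨j, hj, hjε⟩ := ((hystend.eventually (hev ε hε)).and hsmall).exists
        set δ := (1 : ℝ) / (j + 1) with hδ_def
        have hδp : 0 < δ := hδpos j
        have hδ1 : δ ≤ 1 := le_trans hjε.le hε1
        -- the difference of the two points
        have hsmul : (1 - δ / r) • x - x = (-(δ / r)) • x := by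
          rw [sub_smul, one_smul, neg_smul]
          abel
        have hdiff : ys j - p = mkP ((-(δ / r)) • x) (δ ^ 2 - 2 * δ * r) := by
          rw [hp, hys_def, mkP_sub, hsmul]
          congr 1
          ring
        rw [hdiff, mkP_inner, real_inner_smul_right] at hj
        -- bound the norm
        have hnsm : ‖(-(δ / r)) • x‖ = δ := by
          rw [norm_smul, Real.norm_eq_abs, abs_neg, abs_div, abs_of_pos hδp, abs_of_pos hr,
            ← hr_def]
          field_simp
        have habs : |δ ^ 2 - 2 * δ * r| ≤ δ ^ 2 + 2 * δ * r :=
          abs_le.mpr ⟨by nlinarith, by nlinarith⟩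
        have hnrm2 : ‖mkP ((-(δ / r)) • x) (δ ^ 2 - 2 * δ * r)‖ ≤ δ + (δ ^ 2 + 2 * δ * r) :=
          le_trans (mkP_norm_le _ _) (by rw [hnsm]; linarith)
        have ineq1 : -(δ / r) * ip + s * (δ ^ 2 - 2 * δ * r)
            ≤ ε * (δ + (δ ^ 2 + 2 * δ * r)) := by
          calc -(δ / r) * ip + s * (δ ^ 2 - 2 * δ * r) ≤ ε * ‖mkP ((-(δ / r)) • x) (δ ^ 2 - 2 * δ * r)‖ := hj
            _ ≤ ε * (δ + (δ ^ 2 + 2 * δ * r)) := by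
                exact mul_le_mul_of_nonneg_left hnrm2 hε.le
        have hpos : (0 : ℝ) < r / δ := by positivity
        have hmul := mul_le_mul_of_nonneg_left ineq1 hpos.le
        have hL : (r / δ) * (-(δ / r) * ip + s * (δ ^ 2 - 2 * δ * r))
            = -ip + s * δ * r - 2 * s * r ^ 2 := by
          field_simp
          ring
        have hR : (r / δ) * (ε * (δ + (δ ^ 2 + 2 * δ * r)))
            = ε * (r + δ * r + 2 * r ^ 2) := by
          field_simp
          ring
        rw [hL, hR] at hmul
        -- combine
        have g1 : δ * (ε * r) ≤ 1 * (ε * r) :=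
          mul_le_mul_of_nonneg_right hδ1 (by positivity)
        have g2 : δ * (|s| * r) ≤ ε * (|s| * r) :=
          mul_le_mul_of_nonneg_right hjε.le (mul_nonneg (abs_nonneg s) hr.le)
        have g3 : (-s) * (δ * r) ≤ |s| * (δ * r) :=
          mul_le_mul_of_nonneg_right (neg_le_abs s) (by positivity)
        linarith only [hmul, g1, g2, g3]
      linarith only [hA]
    have hCS : ip ≤ ‖v.fst‖ * r := real_inner_le_norm v.fst x
    have hfin : 2 * (-s) * r * r ≤ ‖v.fst‖ * r := le_trans key2 hCS
    exact le_of_mul_le_mul_right hfin hr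

private lemma lim_key {p v : WithLp 2 (E × ℝ)}
    (hv : v ∈ LimitingNormalCone (epiSet (fun z : E => ((‖z‖ ^ 2 : ℝ) : EReal))) p) :
    v.snd ≤ 0 ∧ 2 * (-v.snd) * ‖p.fst‖ ≤ ‖v.fst‖ := by
  obtain ⟨ps, vs, hF, hps, hvs⟩ := hv
  have key := fun j => frechet_key (hF j)
  have hcf : Continuous (fun q : WithLp 2 (E × ℝ) => q.fst) :=
    continuous_fst.comp (WithLp.prod_continuous_ofLp (p := 2) (α := E) (β := ℝ))
  have hcs : Continuous (fun q : WithLp 2 (E × ℝ) => q.snd) :=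
    continuous_snd.comp (WithLp.prod_continuous_ofLp (p := 2) (α := E) (β := ℝ))
  have hpf : Filter.Tendsto (fun j => (ps j).fst) Filter.atTop (𝓝 p.fst) :=
    ((hcf.tendsto _).comp hps)
  have hvf : Filter.Tendsto (fun j => (vs j).fst) Filter.atTop (𝓝 v.fst) :=
    ((hcf.tendsto _).comp hvs)
  have hvsn : Filter.Tendsto (fun j => (vs j).snd) Filter.atTop (𝓝 v.snd) :=
    ((hcs.tendsto _).comp hvs)
  constructor
  · exact le_of_tendsto hvsn (Filter.Eventually.of_forall fun j => (key j).1)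
  · refine le_of_tendsto_of_tendsto' ?_ hvf.norm (fun j => (key j).2)
    exact (((hvsn.neg).const_mul 2).mul hpf.norm)

end AuxProof

/-- for `g(x,y) = x² + y²` one has `∂g(∞) = ∅`. -/
theorem subInfty_sq_empty :
    subInfty (fun p : EuclideanSpace ℝ (Fin 2) => (((p 0)^2 + (p 1)^2 : ℝ) : EReal)) = ∅ := by
  have hfg : (fun p : EuclideanSpace ℝ (Fin 2) => (((p 0)^2 + (p 1)^2 : ℝ) : EReal))
      = fun p : EuclideanSpace ℝ (Fin 2) => ((‖p‖ ^ 2 : ℝ) : EReal) := by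
    funext p
    congr 1
    rw [EuclideanSpace.norm_eq, Real.sq_sqrt (by positivity)]
    simp [Fin.sum_univ_two, sq_abs]
  rw [hfg]
  apply Set.eq_empty_iff_forall_notMem.mpr
  intro u hu
  obtain ⟨xs, ws, -, hnorm, hmem, htend⟩ := hu
  have key := fun k => lim_key (hmem k)
  have hcf : Continuous (fun q : WithLp 2 (EuclideanSpace ℝ (Fin 2) × ℝ) => q.fst) :=
    continuous_fst.comp (WithLp.prod_continuous_ofLp (p := 2) (α := EuclideanSpace ℝ (Fin 2)) (β := ℝ))
  have hcs : Continuous (fun q : WithLp 2 (EuclideanSpace ℝ (Fin 2) × ℝ) => q.snd) :=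
    continuous_snd.comp (WithLp.prod_continuous_ofLp (p := 2) (α := EuclideanSpace ℝ (Fin 2)) (β := ℝ))
  have hwf : Filter.Tendsto (fun k => (ws k).fst) Filter.atTop (𝓝 u) :=
    (continuous_fst.tendsto _).comp htend
  have hws : Filter.Tendsto (fun k => (ws k).snd) Filter.atTop (𝓝 (-1 : ℝ)) :=
    (continuous_snd.tendsto _).comp htend
  have h1 : ∀ᶠ k in Filter.atTop, (ws k).snd < -(1/2 : ℝ) :=
    hws.eventually_lt_const (by norm_num)
  have h2 : ∀ᶠ k in Filter.atTop, ‖(ws k).fst‖ < ‖u‖ + 1 :=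
    hwf.norm.eventually_lt_const (by linarith)
  have h3 : ∀ᶠ k in Filter.atTop, ‖u‖ + 1 < ‖xs k‖ :=
    hnorm.eventually_gt_atTop _
  obtain ⟨k, ha, hb, hc⟩ := (h1.and (h2.and h3)).exists
  have hk := (key k).2
  have hfst : (mkP (xs k)
      (((fun p : EuclideanSpace ℝ (Fin 2) => ((‖p‖ ^ 2 : ℝ) : EReal)) (xs k)).toReal)).fst
      = xs k := rfl
  rw [hfst] at hk
  nlinarith [norm_nonneg (xs k)]
end

section
/- Let g: ℝ² → ℝ be given by g(x,y) = x² + y², and let S := {(x,y) ∈ ℝ² : g(x,y) ≤ 0} = {(0,0)}. Then S has an error bound at infinity (there exist α > 0 and R > 0 such that d((x,y);S) ≤ α·max(g(x,y),0) for all (x,y) with ‖(x,y)‖ > R), but S has no global error bound of Hoffman's type: there is no τ > 0 such that d((x,y);S) ≤ τ·max(g(x,y),0) for all (x,y) ∈ ℝ². -/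
open Filter Topology Set Pointwise RealInnerProductSpace

/-- `S = {(x,y) : x² + y² ≤ 0} = {(0,0)}` has an error bound at infinity,
but no global (Hoffman-type) error bound. -/
theorem error_bound_at_infty_not_global (S : Set (EuclideanSpace ℝ (Fin 2)))
    (hS : S = {p : EuclideanSpace ℝ (Fin 2) | (p 0)^2 + (p 1)^2 ≤ 0}) :
    S = {(0 : EuclideanSpace ℝ (Fin 2))} ∧
    (∃ α > (0:ℝ), ∃ R > (0:ℝ), ∀ p : EuclideanSpace ℝ (Fin 2), R < ‖p‖ →
      Metric.infDist p S ≤ α * max ((p 0)^2 + (p 1)^2) 0) ∧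
    ¬ (∃ τ > (0:ℝ), ∀ p : EuclideanSpace ℝ (Fin 2),
      Metric.infDist p S ≤ τ * max ((p 0)^2 + (p 1)^2) 0) := by
  have hnorm : ∀ p : EuclideanSpace ℝ (Fin 2), (p 0)^2 + (p 1)^2 = ‖p‖^2 := by
    intro p
    rw [EuclideanSpace.norm_eq, Real.sq_sqrt (by positivity)]
    simp [Fin.sum_univ_two, sq_abs]
  have hSeq : S = {(0 : EuclideanSpace ℝ (Fin 2))} := by
    rw [hS]
    ext p
    simp only [Set.mem_setOf_eq, Set.mem_singleton_iff, hnorm p]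
    constructor
    · intro h
      have : ‖p‖ = 0 := by nlinarith [norm_nonneg p]
      simpa using this
    · rintro rfl; simp
  have hd : ∀ p : EuclideanSpace ℝ (Fin 2), Metric.infDist p S = ‖p‖ := by
    intro p
    rw [hSeq, Metric.infDist_singleton, dist_zero_right]
  refine ⟨hSeq, ⟨1, one_pos, 1, one_pos, fun p hp => ?_⟩, ?_⟩
  · rw [hd]
    have h1 : max ((p 0)^2 + (p 1)^2) 0 = ‖p‖^2 := by
      rw [hnorm]; exact max_eq_left (by positivity)
    rw [h1, one_mul]
    nlinarith [norm_nonneg p]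
  · rintro ⟨τ, hτ, h⟩
    set c := 1 / (2 * τ) with hc
    have hcpos : 0 < c := by positivity
    set p : EuclideanSpace ℝ (Fin 2) := EuclideanSpace.single 0 c with hp
    have hp0 : p 0 = c := by simp [hp]
    have hp1 : p 1 = 0 := by simp [hp]
    have hnp : ‖p‖ = c := by
      rw [hp, EuclideanSpace.norm_single]; exact Real.norm_of_nonneg hcpos.le
    have := h p
    rw [hd, hnp, hp0, hp1] at this
    have hmax : max (c^2 + 0^2) 0 = c^2 := by
      rw [max_eq_left (by positivity)]; ring
    rw [hmax] at this
    have hτc : τ * c = 1/2 := by rw [hc]; field_simp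
    nlinarith
end

section
/- Let S be a nonempty, closed and unbounded subset of ℝⁿ, and let d(·;S): ℝⁿ → ℝ be the distance function d(x;S) := inf{‖y − x‖ : y ∈ S}. Then N(∞;S) ⊆ ℝ₊·∂d(∞;S), where ℝ₊·∂d(∞;S) := {t·u : t ≥ 0, u ∈ ∂d(∞;S)} and ∂d(∞;S) is the limiting subdifferential at infinity of the function x ↦ d(x;S). -/
open Filter Topology Set Pointwise RealInnerProductSpace

section AuxProp41
variable {E : Type*} [NormedAddCommGroup E] [InnerProductSpace ℝ E]

lemma aux_smul_prop41 {Ω : Set E} {x v : E} (hv : v ∈ FrechetNormalCone Ω x) {c : ℝ}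
    (hc : 0 < c) : c • v ∈ FrechetNormalCone Ω x := by
  refine ⟨hv.1, fun ε hε => ?_⟩
  filter_upwards [hv.2 (ε / c) (by positivity)] with y hy
  rw [real_inner_smul_left]
  calc c * ⟪v, y - x⟫ ≤ c * (ε / c * ‖y - x‖) := by
        exact mul_le_mul_of_nonneg_left hy hc.le
    _ = ε * ‖y - x‖ := by field_simp

omit [InnerProductSpace ℝ E] in
lemma fst_norm_le_prop41 (p : WithLp 2 (E × ℝ)) : ‖p.fst‖ ≤ ‖p‖ := by
  have h := WithLp.prod_norm_sq_eq_of_L2 p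
  have h2 : ‖p.fst‖ ^ 2 ≤ ‖p‖ ^ 2 := by rw [h]; nlinarith [sq_nonneg ‖p.snd‖]
  calc ‖p.fst‖ = Real.sqrt (‖p.fst‖ ^ 2) := (Real.sqrt_sq (norm_nonneg _)).symm
    _ ≤ Real.sqrt (‖p‖ ^ 2) := Real.sqrt_le_sqrt h2
    _ = ‖p‖ := Real.sqrt_sq (norm_nonneg _)

lemma key_prop41 {S : Set E} [ProperSpace E] (hScl : IsClosed S) (hSne : S.Nonempty)
    {x w : E} (hw : w ∈ FrechetNormalCone S x) (hw1 : ‖w‖ ≤ 1) :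
    mkP w (-1) ∈ FrechetNormalCone
      (epiSet (fun y => ((Metric.infDist y S : ℝ) : EReal))) (mkP x 0) := by
  have hxS : x ∈ S := hw.1
  constructor
  · show ((Metric.infDist x S : ℝ) : EReal) ≤ ((0:ℝ) : EReal)
    simp [Metric.infDist_zero_of_mem hxS]
  · intro ε hε
    have h2 := hw.2 (ε / 2) (by positivity)
    rw [Metric.nhdsWithin_basis_ball.eventually_iff] at h2 ⊢
    obtain ⟨δ, hδ, hδh⟩ := h2
    simp only [Set.mem_inter_iff, Metric.mem_ball, and_imp] at hδh ⊢
    refine ⟨δ / 2, by positivity, fun p hpd hpe => ?_⟩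
    have hpe' : Metric.infDist p.fst S ≤ p.snd := by
      have := hpe
      simp only [epiSet, mem_setOf_eq, EReal.coe_le_coe_iff] at this
      exact this
    obtain ⟨q, hqS, hq⟩ := hScl.exists_infDist_eq_dist hSne p.fst
    have hfst : (p - mkP x 0).fst = p.fst - x := rfl
    have hsnd : (p - mkP x 0).snd = p.snd - 0 := rfl
    have hnfst : ‖p.fst - x‖ ≤ ‖p - mkP x 0‖ := by
      have := fst_norm_le_prop41 (p - mkP x 0); rwa [hfst] at this
    have hdpx : dist p.fst x ≤ dist p (mkP x 0) := by
      rw [dist_eq_norm, dist_eq_norm]; exact hnfst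
    have hdq : Metric.infDist p.fst S ≤ dist p.fst x := Metric.infDist_le_dist_of_mem hxS
    have hqx : dist q x ≤ 2 * dist p.fst x := by
      calc dist q x ≤ dist q p.fst + dist p.fst x := dist_triangle _ _ _
        _ ≤ 2 * dist p.fst x := by rw [dist_comm q p.fst, ← hq]; linarith
    have hpd' : dist p (mkP x 0) < δ / 2 := hpd
    have hqball : dist q x < δ := by
      calc dist q x ≤ 2 * dist p.fst x := hqx
        _ ≤ 2 * dist p (mkP x 0) := by linarith
        _ < δ := by linarith
    have hqest : ⟪w, q - x⟫ ≤ ε / 2 * ‖q - x‖ := hδh hqball hqS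
    have hinner : ⟪mkP w (-1), p - mkP x 0⟫ = ⟪w, p.fst - x⟫ + (-1) * (p.snd - 0) := by
      rw [WithLp.prod_inner_apply]
      change ⟪(mkP w (-1)).ofLp.1, (p - mkP x 0).fst⟫ + ⟪(mkP w (-1)).ofLp.2, (p - mkP x 0).snd⟫ = _
      rw [hfst, hsnd]
      norm_num [mkP, RCLike.inner_apply]
    rw [hinner]
    have hsplit : ⟪w, p.fst - x⟫ = ⟪w, q - x⟫ + ⟪w, p.fst - q⟫ := by
      rw [← inner_add_right]; congr 1; abel
    have hcs : ⟪w, p.fst - q⟫ ≤ ‖p.fst - q‖ := by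
      calc ⟪w, p.fst - q⟫ ≤ ‖w‖ * ‖p.fst - q‖ := real_inner_le_norm _ _
        _ ≤ 1 * ‖p.fst - q‖ := mul_le_mul_of_nonneg_right hw1 (norm_nonneg _)
        _ = ‖p.fst - q‖ := one_mul _
    have hpq : ‖p.fst - q‖ = Metric.infDist p.fst S := by rw [← dist_eq_norm, ← hq]
    have hqxn : ‖q - x‖ ≤ 2 * ‖p - mkP x 0‖ := by
      have := hqx
      rw [dist_eq_norm] at this
      calc ‖q - x‖ ≤ 2 * dist p.fst x := this
        _ ≤ 2 * ‖p - mkP x 0‖ := by rw [dist_eq_norm]; linarith [hnfst]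
    calc ⟪w, p.fst - x⟫ + (-1) * (p.snd - 0)
        = ⟪w, q - x⟫ + ⟪w, p.fst - q⟫ - p.snd := by rw [hsplit]; ring
      _ ≤ ε / 2 * ‖q - x‖ + Metric.infDist p.fst S - p.snd := by
          rw [← hpq]; linarith [hcs]
      _ ≤ ε / 2 * ‖q - x‖ := by linarith
      _ ≤ ε / 2 * (2 * ‖p - mkP x 0‖) := by
          apply mul_le_mul_of_nonneg_left hqxn (by positivity)
      _ = ε * ‖p - mkP x 0‖ := by ring

end AuxProp41

/-- Proposition 4.1: `N(∞;S) ⊆ ℝ₊·∂d(∞;S)`. -/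
theorem normalConeAtInfty_subset_scalings_subInfty_dist {n : ℕ}
    (S : Set (EuclideanSpace ℝ (Fin n)))
    (hSne : S.Nonempty) (hScl : IsClosed S) (hSunbdd : ¬ Bornology.IsBounded S) :
    NormalConeAtInfty S ⊆
      {w | ∃ t : ℝ, 0 ≤ t ∧ ∃ u ∈ subInfty
        (fun x : EuclideanSpace ℝ (Fin n) => ((Metric.infDist x S : ℝ) : EReal)), w = t • u} := by
  set f : EuclideanSpace ℝ (Fin n) → EReal :=
    fun x => ((Metric.infDist x S : ℝ) : EReal) with hf
  rintro v ⟨xs, vs, hvs, hxs, hv⟩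
  set t : ℝ := max 1 ‖v‖ with ht
  have ht0 : (0:ℝ) < t := lt_of_lt_of_le one_pos (le_max_left _ _)
  refine ⟨t, ht0.le, t⁻¹ • v, ?_, (smul_inv_smul₀ ht0.ne' v).symm⟩
  set c : ℕ → ℝ := fun k => (max 1 ‖vs k‖)⁻¹ with hc
  have hck : ∀ k, 0 < c k := fun k => by
    simp only [hc]; positivity
  set us : ℕ → EuclideanSpace ℝ (Fin n) := fun k => c k • vs k with hus
  have husF : ∀ k, us k ∈ FrechetNormalCone S (xs k) := fun k =>
    aux_smul_prop41 (hvs k) (hck k)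
  have hus1 : ∀ k, ‖us k‖ ≤ 1 := by
    intro k
    rw [hus, norm_smul, Real.norm_eq_abs, abs_of_pos (hck k)]
    rw [inv_mul_le_one₀ (by positivity)]
    simpa using le_max_right 1 ‖vs k‖
  refine ⟨xs, fun k => mkP (us k) (-1), fun k => EReal.coe_ne_top _, hxs, ?_, ?_⟩
  · intro k
    have hmem : xs k ∈ S := (hvs k).1
    have h0 : (f (xs k)).toReal = 0 := by
      simp [hf, Metric.infDist_zero_of_mem hmem]
    rw [h0]
    exact ⟨fun _ => mkP (xs k) 0, fun _ => mkP (us k) (-1),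
      fun _ => key_prop41 hScl hSne (husF k) (hus1 k), tendsto_const_nhds, tendsto_const_nhds⟩
  · have hequiv : ∀ k, WithLp.equiv 2 _ (mkP (us k) (-1)) = (us k, (-1:ℝ)) := fun k => by
      simp [mkP]
    simp only [hequiv]
    have hcv : Tendsto c atTop (𝓝 t⁻¹) := by
      exact ((tendsto_const_nhds.max hv.norm).inv₀ ht0.ne')
    exact (hcv.smul hv).prodMk_nhds tendsto_const_nhds
end

section
/- Let S := {(x_1, x_2) ∈ ℝ² : x_2 = x_1²} be the parabola in ℝ². Then the normal cone at infinity of S is N(∞;S) = ℝ × {0}. -/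
open Filter Topology Set Pointwise RealInnerProductSpace

noncomputable section ParabolaAux

def pt (a b : ℝ) : EuclideanSpace ℝ (Fin 2) := WithLp.toLp 2 ![a, b]
@[simp] lemma pt_zero (a b : ℝ) : pt a b 0 = a := rfl
@[simp] lemma pt_one (a b : ℝ) : pt a b 1 = b := rfl
lemma euclid_eq (x : EuclideanSpace ℝ (Fin 2)) : x = pt (x 0) (x 1) := by
  ext i; fin_cases i <;> rfl
lemma norm_pt (a b : ℝ) : ‖pt a b‖ = Real.sqrt (a^2 + b^2) := by
  rw [EuclideanSpace.norm_eq]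
  simp [Fin.sum_univ_two, Real.norm_eq_abs, sq_abs]
lemma abs_coord_le (x : EuclideanSpace ℝ (Fin 2)) (i : Fin 2) : |x i| ≤ ‖x‖ := by
  rw [EuclideanSpace.norm_eq, ← Real.sqrt_sq_eq_abs]
  apply Real.sqrt_le_sqrt
  calc (x i)^2 = ‖x i‖^2 := by rw [Real.norm_eq_abs, sq_abs]
    _ ≤ ∑ j, ‖x j‖^2 := Finset.single_le_sum (f := fun j => ‖x j‖^2) (fun j _ => sq_nonneg _) (Finset.mem_univ i)
lemma cont_eval (i : Fin 2) : Continuous (fun y : EuclideanSpace ℝ (Fin 2) => y i) :=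
  (continuous_apply i).comp (PiLp.continuous_ofLp 2 (fun _ : Fin 2 => ℝ))
lemma inner_formula (v w : EuclideanSpace ℝ (Fin 2)) : ⟪v, w⟫ = v 0 * w 0 + v 1 * w 1 := by
  simp [PiLp.inner_apply, Fin.sum_univ_two, RCLike.inner_apply, mul_comm]

abbrev Spar : Set (EuclideanSpace ℝ (Fin 2)) := {p : EuclideanSpace ℝ (Fin 2) | p 1 = (p 0)^2}

lemma frechet_mem (t lam : ℝ) :
    pt (2*t*lam) (-lam) ∈ FrechetNormalCone Spar (pt t (t^2)) := by
  constructor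
  · show pt t (t^2) 1 = (pt t (t^2) 0)^2
    simp
  intro ε hε
  have h0 : Tendsto (fun y : EuclideanSpace ℝ (Fin 2) => |lam| * |y 0 - t|)
      (𝓝[Spar] (pt t (t^2))) (𝓝 (|lam| * |(pt t (t^2)) 0 - t|)) :=
    ((((cont_eval 0).sub continuous_const).abs.const_smul |lam|).tendsto _).mono_left
      nhdsWithin_le_nhds
  have h0' : ∀ᶠ y in 𝓝[Spar] (pt t (t^2)), |lam| * |y 0 - t| ≤ ε := by
    refine h0.eventually_le_const ?_
    simp [hε]
  filter_upwards [h0', self_mem_nhdsWithin] with y hy hyS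
  have hy1 : y 1 = (y 0)^2 := hyS
  set s := y 0 with hs
  have hsub0 : (y - pt t (t^2)) 0 = s - t := by simp [PiLp.sub_apply]; rfl
  have hsub1 : (y - pt t (t^2)) 1 = s^2 - t^2 := by simp [PiLp.sub_apply, hy1]
  have hinner : ⟪pt (2*t*lam) (-lam), y - pt t (t^2)⟫ = -lam * (s-t)^2 := by
    rw [inner_formula, hsub0, hsub1]; simp; ring
  have habs : |s - t| ≤ ‖y - pt t (t^2)‖ := by
    rw [← hsub0]; exact abs_coord_le _ 0
  rw [hinner]
  nlinarith [abs_nonneg (s - t), sq_abs (s - t), neg_abs_le lam, abs_nonneg lam,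
    norm_nonneg (y - pt t (t^2)), mul_le_mul_of_nonneg_right hy (abs_nonneg (s-t)),
    mul_le_mul_of_nonneg_left habs hε.le]

lemma frechet_char {x v : EuclideanSpace ℝ (Fin 2)}
    (h : v ∈ FrechetNormalCone Spar x) : v 0 + 2 * x 0 * v 1 = 0 := by
  obtain ⟨hx, hv⟩ := h
  set t := x 0 with ht
  have hx1 : x 1 = t^2 := hx
  have hxpt : x = pt t (t^2) := by rw [euclid_eq x, hx1]
  set γ : ℝ → EuclideanSpace ℝ (Fin 2) := fun s => pt s (s^2) with hγ
  have hγc : Continuous γ := by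
    apply Continuous.comp (PiLp.continuous_toLp 2 (fun _ : Fin 2 => ℝ))
    refine continuous_pi fun i => ?_
    fin_cases i
    · simpa using continuous_id'
    · simpa using (continuous_pow 2 : Continuous fun a : ℝ => a ^ 2)
  have hγt : Tendsto γ (𝓝 t) (𝓝[Spar] x) := by
    rw [nhdsWithin]
    refine tendsto_inf.2 ⟨?_, tendsto_principal.2 (Eventually.of_forall fun s => ?_)⟩
    · have := hγc.tendsto t
      rw [show γ t = x by rw [hxpt]] at this
      exact this
    · show γ s 1 = (γ s 0)^2
      simp [hγ]
  -- formulas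
  have hsub0 : ∀ s, (γ s - x) 0 = s - t := by intro s; simp [PiLp.sub_apply, hγ, hxpt]
  have hsub1 : ∀ s, (γ s - x) 1 = s^2 - t^2 := by intro s; simp [PiLp.sub_apply, hγ, hxpt]
  have hinner : ∀ s, ⟪v, γ s - x⟫ = (s - t) * (v 0 + v 1 * (s + t)) := by
    intro s; rw [inner_formula, hsub0, hsub1]; ring
  have hnorm : ∀ s, ‖γ s - x‖ = |s - t| * Real.sqrt (1 + (s + t)^2) := by
    intro s
    rw [euclid_eq (γ s - x), hsub0, hsub1, norm_pt]
    rw [show (s - t)^2 + (s^2 - t^2)^2 = (s-t)^2 * (1 + (s+t)^2) by ring,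
      Real.sqrt_mul (sq_nonneg _), Real.sqrt_sq_eq_abs]
  set c := v 0 + 2 * t * v 1 with hc
  have hceq : v 0 + v 1 * (t + t) = c := by rw [hc]; ring
  set D := Real.sqrt (1 + (t + t)^2) with hD
  have hD1 : 1 ≤ D := by
    have h := Real.sqrt_le_sqrt (show (1:ℝ) ≤ 1 + (t+t)^2 by nlinarith [sq_nonneg (t+t)])
    rwa [Real.sqrt_one] at h
  have key : ∀ ε > (0:ℝ), |c| ≤ ε * D := by
    intro ε hε
    have hev : ∀ᶠ s in 𝓝 t,
        (s - t) * (v 0 + v 1 * (s + t)) ≤ ε * (|s - t| * Real.sqrt (1 + (s + t)^2)) := by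
      filter_upwards [hγt.eventually (hv ε hε)] with s hs
      rw [hinner, hnorm] at hs; exact hs
    have hcontf : Tendsto (fun s => v 0 + v 1 * (s + t)) (𝓝 t) (𝓝 (v 0 + v 1 * (t + t))) := by
      apply Continuous.tendsto; fun_prop
    have hcontg : Tendsto (fun s => ε * Real.sqrt (1 + (s + t)^2)) (𝓝 t)
        (𝓝 (ε * Real.sqrt (1 + (t + t)^2))) := by
      apply Continuous.tendsto
      exact continuous_const.mul ((continuous_const.add ((continuous_id.add continuous_const).pow 2)).sqrt)
    have hR : v 0 + v 1 * (t + t) ≤ ε * D := by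
      refine le_of_tendsto_of_tendsto (b := 𝓝[>] t) (hcontf.mono_left nhdsWithin_le_nhds)
        (hcontg.mono_left nhdsWithin_le_nhds) ?_
      filter_upwards [hev.filter_mono (nhdsWithin_le_nhds (s := Ioi t)), self_mem_nhdsWithin]
        with s hs hst
      have hd : (0:ℝ) < s - t := sub_pos.2 hst
      rw [abs_of_pos hd] at hs
      have hs' : (s - t) * (v 0 + v 1 * (s + t)) ≤ (s - t) * (ε * Real.sqrt (1 + (s + t)^2)) := by
        linarith [hs, mul_comm ε ((s-t) * Real.sqrt (1 + (s+t)^2))]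
      exact le_of_mul_le_mul_left hs' hd
    have hL : -(v 0 + v 1 * (t + t)) ≤ ε * D := by
      refine le_of_tendsto_of_tendsto (b := 𝓝[<] t) ((hcontf.mono_left nhdsWithin_le_nhds).neg)
        (hcontg.mono_left nhdsWithin_le_nhds) ?_
      filter_upwards [hev.filter_mono (nhdsWithin_le_nhds (s := Iio t)), self_mem_nhdsWithin]
        with s hs hst
      have hd : (0:ℝ) < t - s := sub_pos.2 hst
      rw [abs_of_neg (by linarith : s - t < 0)] at hs
      have hs' : (t - s) * (-(v 0 + v 1 * (s + t))) ≤ (t - s) * (ε * Real.sqrt (1 + (s + t)^2)) := by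
        nlinarith [hs]
      exact le_of_mul_le_mul_left hs' hd
    rw [hceq] at hR hL
    exact abs_le.2 ⟨by linarith, hR⟩
  have hc0 : c = 0 := by
    by_contra hne
    have hpos : 0 < |c| := abs_pos.2 hne
    have hDpos : 0 < D := lt_of_lt_of_le one_pos hD1
    have hthis := key (|c| / (2 * D)) (by positivity)
    have heq : |c| / (2 * D) * D = |c| / 2 := by field_simp
    rw [heq] at hthis
    linarith
  rw [← hc0, hc, ht]

end ParabolaAux

/-- for the parabola `S = {(x₁,x₂) : x₂ = x₁²}` one has `N(∞;S) = ℝ × {0}`. -/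
theorem normalConeAtInfty_parabola :
    NormalConeAtInfty {p : EuclideanSpace ℝ (Fin 2) | p 1 = (p 0)^2}
      = {v : EuclideanSpace ℝ (Fin 2) | v 1 = 0} := by
  ext v
  constructor
  · rintro ⟨xs, vs, hmem, hnorm, htend⟩
    show v 1 = 0
    have hrel : ∀ k, vs k 0 + 2 * (xs k 0) * vs k 1 = 0 := fun k => frechet_char (hmem k)
    have hv0 : Tendsto (fun k => vs k 0) atTop (𝓝 (v 0)) := ((cont_eval 0).tendsto v).comp htend
    have hv1 : Tendsto (fun k => vs k 1) atTop (𝓝 (v 1)) := ((cont_eval 1).tendsto v).comp htend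
    -- ‖xs k‖ ≤ (xs k 0)^2 + 1
    have hb : ∀ k, ‖xs k‖ ≤ (xs k 0)^2 + 1 := by
      intro k
      have hS : xs k 1 = (xs k 0)^2 := (hmem k).1
      rw [euclid_eq (xs k), norm_pt, hS]
      have h1 : (xs k 0)^2 + ((xs k 0)^2)^2 ≤ ((xs k 0)^2 + 1)^2 := by nlinarith [sq_nonneg (xs k 0)]
      calc Real.sqrt ((xs k 0)^2 + ((xs k 0)^2)^2) ≤ Real.sqrt (((xs k 0)^2 + 1)^2) :=
            Real.sqrt_le_sqrt h1
        _ = (xs k 0)^2 + 1 := Real.sqrt_sq (by positivity)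
    have hsq : Tendsto (fun k => (xs k 0)^2) atTop atTop := by
      refine tendsto_atTop_mono (fun k => ?_) (tendsto_atTop_add_const_right _ (-1) hnorm)
      linarith [hb k]
    have habs : Tendsto (fun k => |xs k 0|) atTop atTop := by
      rw [tendsto_atTop]
      intro b
      filter_upwards [hsq.eventually_ge_atTop (b^2 + 1)] with k hk
      nlinarith [sq_abs (xs k 0), abs_nonneg (xs k 0)]
    have hinv : Tendsto (fun k => (2 * xs k 0)⁻¹) atTop (𝓝 0) := by
      have h2 : Tendsto (fun k => |2 * xs k 0|) atTop atTop := by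
        have he : (fun k => |2 * xs k 0|) = fun k => 2 * |xs k 0| := by
          funext k; rw [abs_mul]; norm_num
        rw [he]
        exact habs.const_mul_atTop (by norm_num)
      rw [tendsto_zero_iff_norm_tendsto_zero]
      have h3 : Tendsto (fun k => |2 * xs k 0|⁻¹) atTop (𝓝 0) := tendsto_inv_atTop_zero.comp h2
      have he2 : (fun k => ‖(2 * xs k 0)⁻¹‖) = fun k => |2 * xs k 0|⁻¹ := by
        funext k; rw [Real.norm_eq_abs, abs_inv]
      rw [he2]
      exact h3
    have hzero : Tendsto (fun k => vs k 1) atTop (𝓝 0) := by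
      have hne : ∀ᶠ k in atTop, (fun k => -(vs k 0) * (2 * xs k 0)⁻¹) k = vs k 1 := by
        filter_upwards [habs.eventually_ge_atTop 1] with k hk
        have h0 : xs k 0 ≠ 0 := by
          intro h; rw [h] at hk; simp at hk; linarith
        field_simp
        linarith [hrel k]
      have hlim : Tendsto (fun k => -(vs k 0) * (2 * xs k 0)⁻¹) atTop (𝓝 (-(v 0) * 0)) :=
        hv0.neg.mul hinv
      rw [mul_zero] at hlim
      exact Tendsto.congr' hne hlim
    exact tendsto_nhds_unique hv1 hzero
  · intro hv1
    have hv1' : v 1 = 0 := hv1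
    set a := v 0 with ha
    refine ⟨fun k => pt ((k:ℝ)+1) (((k:ℝ)+1)^2), fun k => pt a (-(a / (2*((k:ℝ)+1)))), ?_, ?_, ?_⟩
    · intro k
      have hk : (2:ℝ)*((k:ℝ)+1) ≠ 0 := by positivity
      have h := frechet_mem ((k:ℝ)+1) (a / (2*((k:ℝ)+1)))
      have he : 2*((k:ℝ)+1)*(a / (2*((k:ℝ)+1))) = a := by field_simp
      rwa [he] at h
    · refine tendsto_atTop_mono (f := fun k : ℕ => (k:ℝ)+1) (fun k => ?_) ?_
      · exact le_trans (le_abs_self _) (by simpa using abs_coord_le (pt ((k:ℝ)+1) (((k:ℝ)+1)^2)) 0)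
      · exact tendsto_atTop_add_const_right _ 1 tendsto_natCast_atTop_atTop
    · have hveq : v = pt a 0 := by rw [euclid_eq v, hv1', ha]
      rw [hveq, tendsto_iff_norm_sub_tendsto_zero]
      have hsub : ∀ k : ℕ, ‖pt a (-(a / (2*((k:ℝ)+1)))) - pt a 0‖ = |a / (2*((k:ℝ)+1))| := by
        intro k
        have : pt a (-(a / (2*((k:ℝ)+1)))) - pt a 0 = pt 0 (-(a / (2*((k:ℝ)+1)))) := by
          ext i; fin_cases i <;> simp [PiLp.sub_apply]
        rw [this, norm_pt]
        rw [show (0:ℝ)^2 + (-(a / (2*((k:ℝ)+1))))^2 = (a / (2*((k:ℝ)+1)))^2 by ring,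
          Real.sqrt_sq_eq_abs]
      simp only [hsub]
      have hd : Tendsto (fun k : ℕ => a / (2*((k:ℝ)+1))) atTop (𝓝 0) := by
        apply Tendsto.div_atTop (tendsto_const_nhds)
        exact Tendsto.const_mul_atTop (by norm_num) (tendsto_atTop_add_const_right _ 1 tendsto_natCast_atTop_atTop)
      simpa using hd.abs
end

section
/- Let S := {(x_1, x_2) ∈ ℝ² : x_2 = x_1²} be the parabola in ℝ², and let d(·;S) be the distance function to S. Then (0,−1) ∈ ∂d(∞;S) but (0,−1) ∉ N(∞;S); in particular, the inclusion N(∞;S) ⊆ ℝ₊·∂d(∞;S) is strict for this set S. -/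
open Filter Topology Set Pointwise RealInnerProductSpace

open Filter Topology Set Metric RealInnerProductSpace
noncomputable section
abbrev E2 := EuclideanSpace ℝ (Fin 2)
def mk2 (a b : ℝ) : E2 := (EuclideanSpace.equiv (Fin 2) ℝ).symm ![a, b]
example (t : ℝ) (u : E2) (i : Fin 2) : (t • u) i = t * u i := rfl
example (u w : E2) (i : Fin 2) : (u - w) i = u i - w i := rfl
example : InnerProductSpace ℝ (WithLp 2 (E2 × ℝ)) := by infer_instance
-- coordinate bound
lemma abs_coord_le_s9 (z : E2) (i : Fin 2) : |z i| ≤ ‖z‖ := by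
  rw [EuclideanSpace.norm_eq, Fin.sum_univ_two]
  rw [show |z i| = Real.sqrt ((z i)^2) by rw [Real.sqrt_sq_eq_abs]]
  apply Real.sqrt_le_sqrt
  fin_cases i <;> simp [sq_abs] <;> positivity
lemma norm_le_sum (z : E2) : ‖z‖ ≤ |z 0| + |z 1| := by
  rw [EuclideanSpace.norm_eq, Fin.sum_univ_two]
  rw [show |z 0| + |z 1| = Real.sqrt ((|z 0| + |z 1|)^2) by
    rw [Real.sqrt_sq (by positivity)]]
  apply Real.sqrt_le_sqrt
  simp only [Real.norm_eq_abs]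
  nlinarith [abs_nonneg (z 0), abs_nonneg (z 1), sq_abs (z 0), sq_abs (z 1)]
-- tendsto coordinates
lemma tendsto_coord {us : ℕ → E2} {u : E2} (h : Tendsto us atTop (𝓝 u)) (i : Fin 2) :
    Tendsto (fun k => us k i) atTop (𝓝 (u i)) := by
  rw [tendsto_iff_norm_sub_tendsto_zero] at h ⊢
  refine squeeze_zero (fun k => norm_nonneg _) (fun k => ?_) h
  exact abs_coord_le_s9 (us k - u) i
lemma tendsto_mk2 {f g : ℕ → ℝ} {a b : ℝ} (hf : Tendsto f atTop (𝓝 a))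
    (hg : Tendsto g atTop (𝓝 b)) :
    Tendsto (fun k => mk2 (f k) (g k)) atTop (𝓝 (mk2 a b)) := by
  have hc : Continuous ((EuclideanSpace.equiv (Fin 2) ℝ).symm : (Fin 2 → ℝ) → E2) :=
    (EuclideanSpace.equiv (Fin 2) ℝ).symm.continuous
  have : Tendsto (fun k => (![f k, g k] : Fin 2 → ℝ)) atTop (𝓝 ![a, b]) := by
    rw [tendsto_pi_nhds]
    intro i
    fin_cases i <;> simpa using (by assumption : _)
  exact (hc.tendsto _).comp this
-- the distance function as an EReal-valued function
def dF (S : Set E2) : E2 → EReal := fun p => ((Metric.infDist p S : ℝ) : EReal)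

lemma frechet_epi (S : Set E2) (x u : E2)
    (h : ∀ y : E2, ⟪u, y - x⟫ ≤ infDist y S - infDist x S) :
    mkP u (-1) ∈ FrechetNormalCone (epiSet (dF S)) (mkP x (infDist x S)) := by
  constructor
  · show dF S x ≤ ((infDist x S : ℝ) : EReal)
    exact le_refl _
  · intro ε hε
    filter_upwards [self_mem_nhdsWithin] with q hq
    have hq' : infDist (WithLp.equiv 2 (E2 × ℝ) q).1 S ≤ (WithLp.equiv 2 (E2 × ℝ) q).2 := by
      have := hq
      simp only [epiSet, dF, Set.mem_setOf_eq, EReal.coe_le_coe_iff] at this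
      exact this
    have hinner : ⟪mkP u (-1), q - mkP x (infDist x S)⟫
        = ⟪u, q.ofLp.1 - x⟫ + (-1) * (q.ofLp.2 - infDist x S) := by
      rw [show q - mkP x (infDist x S) = mkP (q.ofLp.1 - x) (q.ofLp.2 - infDist x S) from rfl]
      rw [WithLp.prod_inner_apply]
      norm_num [RCLike.inner_apply, mkP]
    rw [hinner]
    have h2 := h q.ofLp.1
    have : ⟪u, q.ofLp.1 - x⟫ + (-1) * (q.ofLp.2 - infDist x S) ≤ 0 := by
      have : (WithLp.equiv 2 (E2 × ℝ) q).1 = q.ofLp.1 := rfl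
      rw [this] at hq'
      have : (WithLp.equiv 2 (E2 × ℝ) q).2 = q.ofLp.2 := rfl
      rw [this] at hq'
      linarith
    have : (0:ℝ) ≤ ε * ‖q - mkP x (infDist x S)‖ := by positivity
    linarith

lemma frechet_le_limiting {α : Type*} [NormedAddCommGroup α] [InnerProductSpace ℝ α]
    {Ω : Set α} {x w : α} (h : w ∈ FrechetNormalCone Ω x) : w ∈ LimitingNormalCone Ω x :=
  ⟨fun _ => x, fun _ => w, fun _ => h, tendsto_const_nhds, tendsto_const_nhds⟩

lemma mem_subInfty_of_subgrads (S : Set E2) (xs us : ℕ → E2) (u : E2)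
    (hsub : ∀ k, ∀ y : E2, ⟪us k, y - xs k⟫ ≤ infDist y S - infDist (xs k) S)
    (hnorm : Tendsto (fun k => ‖xs k‖) atTop atTop)
    (hu : Tendsto us atTop (𝓝 u)) : u ∈ subInfty (dF S) := by
  refine ⟨xs, fun k => mkP (us k) (-1), fun k => ?_, hnorm, fun k => ?_, ?_⟩
  · exact fun h => by simp [dF] at h
  · have : (dF S (xs k)).toReal = infDist (xs k) S := by simp [dF]
    rw [this]
    exact frechet_le_limiting (frechet_epi S (xs k) (us k) (hsub k))
  · exact hu.prodMk_nhds tendsto_const_nhds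
section Parabola

lemma my_le_infDist {s : Set E2} (hs : s.Nonempty) {x : E2} {b : ℝ}
    (h : ∀ y ∈ s, b ≤ dist x y) : b ≤ infDist x s := by
  have : Nonempty s := hs.to_subtype
  rw [infDist_eq_iInf]
  exact le_ciInf fun y => h y y.2

lemma inner_coords (x y : E2) : ⟪x, y⟫ = x 0 * y 0 + x 1 * y 1 := by
  simp [PiLp.inner_apply, RCLike.inner_apply, Fin.sum_univ_two]
  ring

variable {S : Set E2} (hS : S = {p : E2 | p 1 = (p 0)^2})

lemma coord1_le_dist (y p : E2) : p 1 - y 1 ≤ dist y p := by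
  have h := abs_coord_le_s9 (y - p) 1
  rw [dist_eq_norm]
  have he : (y - p) 1 = y 1 - p 1 := rfl
  rw [he] at h
  cases abs_cases (y 1 - p 1) <;> linarith [h]

include hS

lemma origin_mem : mk2 0 0 ∈ S := by
  rw [hS]; show (mk2 0 0) 1 = ((mk2 0 0) 0)^2; norm_num [mk2]

lemma S_nonempty : S.Nonempty := ⟨mk2 0 0, origin_mem hS⟩

/-- `-y₂ ≤ d(y, S)` for the parabola. -/
lemma neg_coord_le_infDist (y : E2) : -(y 1) ≤ infDist y S := by
  apply my_le_infDist (S_nonempty hS)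
  intro p hp
  rw [hS] at hp
  have hp1 : p 1 = (p 0)^2 := hp
  have := coord1_le_dist y p
  nlinarith [sq_nonneg (p 0)]

/-- distance from `(0,-t)` to the parabola is `t`. -/
lemma infDist_down (t : ℝ) (ht : 0 ≤ t) : infDist (mk2 0 (-t)) S = t := by
  apply le_antisymm
  · have h := infDist_le_dist_of_mem (x := mk2 0 (-t)) (origin_mem hS)
    have hd : dist (mk2 0 (-t)) (mk2 0 0) = t := by
      have : ∀ x y : E2, dist x y = Real.sqrt ((x 0 - y 0)^2 + (x 1 - y 1)^2) := by
        intro x y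
        simp [EuclideanSpace.dist_eq, Fin.sum_univ_two, Real.dist_eq, sq_abs]
      rw [this]
      norm_num [mk2]
      rw [Real.sqrt_sq ht]
    rwa [hd] at h
  · have := neg_coord_le_infDist hS (mk2 0 (-t))
    have h1 : (mk2 0 (-t)) 1 = -t := rfl
    rw [h1] at this; linarith

/-- (0,-1) is a global subgradient of `d(·,S)` at `(0,-t)`. -/
lemma subgrad_down (v : E2) (hv0 : v 0 = 0) (hv1 : v 1 = -1) (t : ℝ) (ht : 0 ≤ t) :
    ∀ y : E2, ⟪v, y - mk2 0 (-t)⟫ ≤ infDist y S - infDist (mk2 0 (-t)) S := by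
  intro y
  rw [infDist_down hS t ht, inner_coords, hv0, hv1]
  have h0 : (y - mk2 0 (-t)) 1 = y 1 + t := by
    show y 1 - (mk2 0 (-t)) 1 = y 1 + t
    norm_num [mk2]
  rw [h0]
  have := neg_coord_le_infDist hS y
  ring_nf
  nlinarith [this]

end Parabola
section Part1

lemma tendsto_nat_add_one : Tendsto (fun k : ℕ => (k:ℝ)+1) atTop atTop :=
  tendsto_atTop_add_const_right atTop 1 tendsto_natCast_atTop_atTop

variable {S : Set E2} (hS : S = {p : E2 | p 1 = (p 0)^2})
include hS

lemma part1 (v : E2) (hv0 : v 0 = 0) (hv1 : v 1 = -1) : v ∈ subInfty (dF S) := by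
  apply mem_subInfty_of_subgrads S (fun k => mk2 0 (-((k:ℝ)+1))) (fun _ => v) v
  · intro k y
    exact subgrad_down hS v hv0 hv1 ((k:ℝ)+1) (by positivity) y
  · have hmono : ∀ k : ℕ, (k:ℝ)+1 ≤ ‖mk2 0 (-((k:ℝ)+1))‖ := by
      intro k
      have h := abs_coord_le_s9 (mk2 0 (-((k:ℝ)+1))) 1
      have h1 : (mk2 0 (-((k:ℝ)+1))) 1 = -((k:ℝ)+1) := rfl
      rw [h1, abs_neg, abs_of_nonneg (by positivity)] at h
      exact h
    exact tendsto_atTop_mono hmono tendsto_nat_add_one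
  · exact tendsto_const_nhds

/-- near-unit normal at the parabola point `(a, a²)`, `a = σ·m`, is a global
subgradient of the distance function there. -/
lemma subgrad_parab (σ : ℝ) (hσ : σ^2 = 1) (m : ℝ) (hm : 1 ≤ m) :
    ∀ y : E2, ⟪mk2 (σ*(1 - 1/(1+2*m))) (-(1/(1+2*m))), y - mk2 (σ*m) ((σ*m)^2)⟫
      ≤ infDist y S - infDist (mk2 (σ*m) ((σ*m)^2)) S := by
  intro y
  set r : ℝ := 1/(1+2*m) with hr
  set a : ℝ := σ*m with ha
  set n : E2 := mk2 (σ*(1 - r)) (-r) with hn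
  set x : E2 := mk2 a (a^2) with hx
  have hmem : x ∈ S := by rw [hS]; show (mk2 a (a^2)) 1 = ((mk2 a (a^2)) 0)^2; norm_num [mk2]
  rw [infDist_zero_of_mem hmem, sub_zero]
  have hrpos : 0 < r := by rw [hr]; positivity
  have hr1 : r * (1 + 2*m) = 1 := by rw [hr]; field_simp
  have hnorm : ‖n‖ ≤ 1 := by
    rw [EuclideanSpace.norm_eq, Fin.sum_univ_two]
    have h0 : n 0 = σ*(1-r) := rfl
    have h1 : n 1 = -r := rfl
    rw [h0, h1]
    simp only [Real.norm_eq_abs, sq_abs]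
    calc Real.sqrt ((σ*(1-r))^2 + (-r)^2) ≤ Real.sqrt 1 := by
          apply Real.sqrt_le_sqrt
          nlinarith [sq_nonneg (1 - r), sq_nonneg r, hrpos.le]
    _ = 1 := Real.sqrt_one
  apply my_le_infDist (S_nonempty hS)
  intro p hp
  rw [hS] at hp
  have hp1 : p 1 = (p 0)^2 := hp
  have hsplit : ⟪n, y - x⟫ = ⟪n, y - p⟫ + ⟪n, p - x⟫ := by
    rw [← inner_add_right]
    congr 1
    abel
  have h1 : ⟪n, y - p⟫ ≤ dist y p := by
    calc ⟪n, y - p⟫ ≤ ‖n‖ * ‖y - p‖ := real_inner_le_norm n (y - p)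
    _ ≤ 1 * ‖y - p‖ := mul_le_mul_of_nonneg_right hnorm (norm_nonneg _)
    _ = dist y p := by rw [one_mul, dist_eq_norm]
  have h2 : ⟪n, p - x⟫ ≤ 0 := by
    rw [inner_coords]
    have e0 : n 0 = σ*(1-r) := rfl
    have e1 : n 1 = -r := rfl
    have f0 : (p - x) 0 = p 0 - a := by show p 0 - x 0 = _; norm_num [hx, mk2]
    have f1 : (p - x) 1 = (p 0)^2 - a^2 := by
      show p 1 - x 1 = _; rw [hp1]; norm_num [hx, mk2]
    rw [e0, e1, f0, f1]
    have key : σ*(1-r) = 2*a*r := by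
      have h3 : 1 - r = 2*m*r := by nlinarith [hr1]
      rw [h3, ha]; ring
    rw [key]
    nlinarith [sq_nonneg (p 0 - a), hrpos]
  rw [hsplit]
  linarith

lemma part_pm1 (σ : ℝ) (hσ : σ^2 = 1) : mk2 σ 0 ∈ subInfty (dF S) := by
  apply mem_subInfty_of_subgrads S
    (fun k => mk2 (σ*((k:ℝ)+1)) ((σ*((k:ℝ)+1))^2))
    (fun k => mk2 (σ*(1 - 1/(1+2*((k:ℝ)+1)))) (-(1/(1+2*((k:ℝ)+1))))) (mk2 σ 0)
  · intro k y
    exact subgrad_parab hS σ hσ ((k:ℝ)+1) (by norm_num) y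
  · have hmono : ∀ k : ℕ, (k:ℝ)+1 ≤ ‖mk2 (σ*((k:ℝ)+1)) ((σ*((k:ℝ)+1))^2)‖ := by
      intro k
      set m : ℝ := (k:ℝ)+1 with hmdef
      have hm : 1 ≤ m := by rw [hmdef]; norm_num
      have h := abs_coord_le_s9 (mk2 (σ*m) ((σ*m)^2)) 1
      have h1 : (mk2 (σ*m) ((σ*m)^2)) 1 = (σ*m)^2 := rfl
      rw [h1, abs_of_nonneg (sq_nonneg _)] at h
      have he : (σ*m)^2 = m^2 := by rw [mul_pow, hσ, one_mul]
      have h2 : m ≤ (σ*m)^2 := by rw [he]; nlinarith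
      linarith
    exact tendsto_atTop_mono hmono tendsto_nat_add_one
  · have hr : Tendsto (fun k : ℕ => 1/(1+2*((k:ℝ)+1))) atTop (𝓝 0) := by
      apply Tendsto.div_atTop tendsto_const_nhds
      apply tendsto_atTop_add_const_left
      have := tendsto_nat_add_one.const_mul_atTop (by norm_num : (0:ℝ) < 2)
      exact this
    have h1 : Tendsto (fun k : ℕ => σ*(1 - 1/(1+2*((k:ℝ)+1)))) atTop (𝓝 σ) := by
      have h2 := ((tendsto_const_nhds : Tendsto (fun _ : ℕ => (1:ℝ)) atTop (𝓝 1)).sub hr).const_mul σ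
      simpa using h2
    have h2 : Tendsto (fun k : ℕ => -(1/(1+2*((k:ℝ)+1)))) atTop (𝓝 0) := by
      simpa using hr.neg
    exact tendsto_mk2 h1 h2

end Part1
section Struct
variable {S : Set E2} (hS : S = {p : E2 | p 1 = (p 0)^2})
include hS

lemma frechet_struct {x w : E2} (h : w ∈ FrechetNormalCone S x) :
    x 1 = (x 0)^2 ∧ w 0 + 2*(x 0)*(w 1) = 0 := by
  obtain ⟨hxS, hev⟩ := h
  rw [hS] at hxS
  have hx1 : x 1 = (x 0)^2 := hxS
  set a : ℝ := x 0 with hadef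
  set M : ℝ := w 0 + 2*a*(w 1) with hMdef
  set C : ℝ := 3 + 2*|a| with hCdef
  have hC : 0 < C := by rw [hCdef]; positivity
  refine ⟨hx1, ?_⟩
  set φ : ℝ → E2 := fun h => mk2 (a+h) ((a+h)^2) with hφdef
  have hφS : ∀ h, φ h ∈ S := by
    intro h; rw [hS]
    show (mk2 (a+h) ((a+h)^2)) 1 = ((mk2 (a+h) ((a+h)^2)) 0)^2
    norm_num [mk2]
  have hφ00 : φ 0 = x := by
    apply PiLp.ext; intro i
    fin_cases i
    · show a + 0 = x 0; rw [add_zero]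
    · show (a + 0)^2 = x 1; rw [add_zero, hx1]
  have hcont : Continuous φ := by
    apply ((EuclideanSpace.equiv (Fin 2) ℝ).symm.continuous).comp
    apply continuous_pi
    intro i
    fin_cases i <;> simp <;> fun_prop
  have hφ : Tendsto φ (𝓝 0) (𝓝[S] x) := by
    rw [tendsto_nhdsWithin_iff]
    constructor
    · have := hcont.tendsto 0
      rwa [hφ00] at this
    · exact Eventually.of_forall hφS
  have hkey : ∀ ε > (0:ℝ), |M| ≤ ε * C := by
    intro ε hε
    have hev2 : ∀ᶠ h in 𝓝 (0:ℝ), ⟪w, φ h - x⟫ ≤ ε * ‖φ h - x‖ := hφ.eventually (hev ε hε)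
    have hsm : ∀ᶠ h : ℝ in 𝓝 0, |h| ≤ 1 := by
      filter_upwards [Metric.ball_mem_nhds (0:ℝ) one_pos] with h hh
      rw [Metric.mem_ball, Real.dist_eq, sub_zero] at hh
      exact hh.le
    have h3 : ∀ᶠ h : ℝ in 𝓝 0, h*M + (w 1)*h^2 ≤ ε*C*|h| := by
      filter_upwards [hev2, hsm] with h h1 h2
      have e0 : (φ h - x) 0 = h := by
        show (a + h) - x 0 = h; rw [← hadef]; ring
      have e1 : (φ h - x) 1 = (a+h)^2 - a^2 := by
        show (a + h)^2 - x 1 = _; rw [hx1]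
      rw [inner_coords, e0, e1] at h1
      have hnle : ‖φ h - x‖ ≤ C * |h| := by
        have := norm_le_sum (φ h - x)
        rw [e0, e1] at this
        have habs : |(a+h)^2 - a^2| ≤ (2*|a|+1)*|h| := by
          have : (a+h)^2 - a^2 = (2*a+h)*h := by ring
          rw [this, abs_mul]
          apply mul_le_mul_of_nonneg_right _ (abs_nonneg h)
          calc |2*a+h| ≤ |2*a| + |h| := abs_add_le _ _
          _ ≤ 2*|a| + 1 := by rw [abs_mul]; simp; linarith
        rw [hCdef]
        nlinarith [abs_nonneg h]
      have : ε * ‖φ h - x‖ ≤ ε * (C * |h|) := mul_le_mul_of_nonneg_left hnle hε.le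
      have hlhs : w 0 * h + w 1 * ((a+h)^2 - a^2) = h*M + (w 1)*h^2 := by
        rw [hMdef]; ring
      rw [hlhs] at h1
      linarith
    have hpos : M ≤ ε * C := by
      have t1 : Tendsto (fun h : ℝ => M + (w 1) * h) (𝓝[>] (0:ℝ)) (𝓝 M) := by
        have : Tendsto (fun h : ℝ => M + (w 1) * h) (𝓝 (0:ℝ)) (𝓝 (M + (w 1) * 0)) := by
          exact (continuous_const.add (continuous_const.mul continuous_id)).tendsto 0
        rw [mul_zero, add_zero] at this
        exact this.mono_left nhdsWithin_le_nhds
      apply le_of_tendsto t1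
      filter_upwards [h3.filter_mono nhdsWithin_le_nhds, self_mem_nhdsWithin] with h hh hp
      rw [Set.mem_Ioi] at hp
      rw [abs_of_pos hp] at hh
      nlinarith
    have hneg : -M ≤ ε * C := by
      have t1 : Tendsto (fun h : ℝ => -(M + (w 1) * h)) (𝓝[<] (0:ℝ)) (𝓝 (-M)) := by
        have : Tendsto (fun h : ℝ => -(M + (w 1) * h)) (𝓝 (0:ℝ)) (𝓝 (-(M + (w 1) * 0))) := by
          exact ((continuous_const.add (continuous_const.mul continuous_id)).neg).tendsto 0
        rw [mul_zero, add_zero] at this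
        exact this.mono_left nhdsWithin_le_nhds
      apply le_of_tendsto t1
      filter_upwards [h3.filter_mono nhdsWithin_le_nhds, self_mem_nhdsWithin] with h hh hp
      rw [Set.mem_Iio] at hp
      rw [abs_of_neg hp] at hh
      nlinarith
    exact abs_le.2 ⟨by linarith, hpos⟩
  have hM0 : |M| ≤ 0 := by
    by_contra hcon
    push_neg at hcon
    have := hkey (|M|/(2*C)) (by positivity)
    have h5 : |M|/(2*C)*C = |M|/2 := by field_simp
    rw [h5] at this
    linarith
  have := abs_nonneg M
  have : |M| = 0 := le_antisymm hM0 this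
  exact abs_eq_zero.mp this

end Struct
section Parts23
variable {S : Set E2} (hS : S = {p : E2 | p 1 = (p 0)^2})
include hS

lemma part2 (v : E2) (hv0 : v 0 = 0) (hv1 : v 1 = -1) : v ∉ NormalConeAtInfty S := by
  rintro ⟨xs, vs, hF, hx, hv⟩
  have h0 := tendsto_coord hv 0
  have h1 := tendsto_coord hv 1
  rw [hv0] at h0
  rw [hv1] at h1
  have hM : ∀ k, vs k 0 + 2*(xs k 0)*(vs k 1) = 0 := fun k => (frechet_struct hS (hF k)).2
  have hpar : ∀ k, xs k 1 = (xs k 0)^2 := fun k => (frechet_struct hS (hF k)).1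
  set aa : ℕ → ℝ := fun k => xs k 0 with haa
  have hev1 : ∀ᶠ k in atTop, vs k 1 < -(1/2) := h1.eventually_lt_const (by norm_num)
  have haeq : ∀ᶠ k in atTop, aa k = vs k 0 / (-2 * vs k 1) := by
    filter_upwards [hev1] with k hk
    have hne : -2 * vs k 1 ≠ 0 := by intro hcon; nlinarith
    rw [eq_div_iff hne]
    linarith [hM k]
  have hq : Tendsto (fun k => vs k 0 / (-2 * vs k 1)) atTop (𝓝 0) := by
    have := h0.div (h1.const_mul (-2)) (by norm_num)
    rw [show (0:ℝ) / (-2 * -1) = 0 by norm_num] at this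
    exact this
  have haz : Tendsto aa atTop (𝓝 0) := hq.congr' (haeq.mono fun k hk => hk.symm)
  have hb : Tendsto (fun k => |aa k| + aa k * aa k) atTop (𝓝 0) := by
    have := (haz.abs).add (haz.mul haz)
    simpa using this
  have hev2 : ∀ᶠ k in atTop, |aa k| + aa k * aa k < 1 := hb.eventually_lt_const (by norm_num)
  have hev3 : ∀ᶠ k in atTop, (2:ℝ) ≤ ‖xs k‖ := hx.eventually_ge_atTop 2
  obtain ⟨k, hk2, hk3⟩ := (hev2.and hev3).exists
  have hle : ‖xs k‖ ≤ |aa k| + aa k * aa k := by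
    have h := norm_le_sum (xs k)
    have : |xs k 1| = aa k * aa k := by
      rw [hpar k, abs_of_nonneg (sq_nonneg _)]; ring
    rw [this] at h
    exact h
  linarith

lemma part3_w1 (w : E2) (hw : w ∈ NormalConeAtInfty S) : w 1 = 0 := by
  obtain ⟨xs, vs, hF, hx, hv⟩ := hw
  have h0 := tendsto_coord hv 0
  have h1 := tendsto_coord hv 1
  by_contra hw1
  have hw1pos : 0 < |w 1| := abs_pos.mpr hw1
  have hM : ∀ k, vs k 0 + 2*(xs k 0)*(vs k 1) = 0 := fun k => (frechet_struct hS (hF k)).2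
  have hpar : ∀ k, xs k 1 = (xs k 0)^2 := fun k => (frechet_struct hS (hF k)).1
  set aa : ℕ → ℝ := fun k => xs k 0 with haa
  set A : ℝ := (|w 0| + 1)/|w 1| with hA
  have hApos : 0 ≤ A := by rw [hA]; positivity
  have hb0 : ∀ᶠ k in atTop, |vs k 0| ≤ |w 0| + 1 := by
    filter_upwards [h0 (Metric.ball_mem_nhds (w 0) one_pos)] with k hk
    simp only [Set.mem_preimage, Metric.mem_ball, Real.dist_eq] at hk
    cases abs_cases (vs k 0 - w 0) <;> cases abs_cases (vs k 0) <;>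
      cases abs_cases (w 0) <;> linarith
  have hb1 : ∀ᶠ k in atTop, |w 1|/2 ≤ |vs k 1| := by
    filter_upwards [h1 (Metric.ball_mem_nhds (w 1) (by positivity : (0:ℝ) < |w 1|/2))]
      with k hk
    simp only [Set.mem_preimage, Metric.mem_ball, Real.dist_eq] at hk
    cases abs_cases (vs k 1 - w 1) <;> cases abs_cases (vs k 1) <;>
      cases abs_cases (w 1) <;> linarith
  have hev3 : ∀ᶠ k in atTop, A + A^2 + 1 ≤ ‖xs k‖ := hx.eventually_ge_atTop _
  obtain ⟨k, ⟨hk0, hk1⟩, hk3⟩ := ((hb0.and hb1).and hev3).exists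
  have heq : vs k 0 = -2 * aa k * vs k 1 := by linarith [hM k]
  have heqabs : |vs k 0| = 2 * |aa k| * |vs k 1| := by
    rw [heq, abs_mul, abs_mul, show |(-2:ℝ)| = 2 by norm_num]
  have haaA : |aa k| ≤ A := by
    rw [hA, le_div_iff₀ hw1pos]
    nlinarith [abs_nonneg (aa k), abs_nonneg (vs k 1)]
  have hle : ‖xs k‖ ≤ A + A^2 := by
    have h := norm_le_sum (xs k)
    have hsq : |xs k 1| = |aa k|^2 := by
      rw [hpar k, abs_of_nonneg (sq_nonneg _), sq_abs]
    rw [hsq] at h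
    have : |aa k|^2 ≤ A^2 := by nlinarith [abs_nonneg (aa k)]
    linarith
  linarith

end Parts23

theorem parabola_strict_inclusion' (S : Set (EuclideanSpace ℝ (Fin 2)))
    (hS : S = {p : EuclideanSpace ℝ (Fin 2) | p 1 = (p 0)^2})
    (v : EuclideanSpace ℝ (Fin 2)) (hv0 : v 0 = 0) (hv1 : v 1 = -1) :
    v ∈ subInfty (fun p : EuclideanSpace ℝ (Fin 2) => ((Metric.infDist p S : ℝ) : EReal)) ∧
    v ∉ NormalConeAtInfty S ∧
    NormalConeAtInfty S ⊂
      {w | ∃ t : ℝ, 0 ≤ t ∧ ∃ u ∈ subInfty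
        (fun p : EuclideanSpace ℝ (Fin 2) => ((Metric.infDist p S : ℝ) : EReal)), w = t • u} := by
  have hmem : v ∈ subInfty (dF S) := part1 hS v hv0 hv1
  have hnot : v ∉ NormalConeAtInfty S := part2 hS v hv0 hv1
  refine ⟨hmem, hnot, ?_⟩
  rw [Set.ssubset_def]
  constructor
  · intro w hw
    have hw1 : w 1 = 0 := part3_w1 hS w hw
    rcases le_or_gt 0 (w 0) with h|h
    · refine ⟨w 0, h, mk2 1 0, part_pm1 hS 1 (by norm_num), ?_⟩
      apply PiLp.ext; intro i
      fin_cases i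
      · show w 0 = w 0 * (mk2 1 0) 0
        norm_num [mk2]
      · show w 1 = w 0 * (mk2 1 0) 1
        rw [hw1]; norm_num [mk2]
    · refine ⟨-(w 0), by linarith, mk2 (-1) 0, part_pm1 hS (-1) (by norm_num), ?_⟩
      apply PiLp.ext; intro i
      fin_cases i
      · show w 0 = -(w 0) * (mk2 (-1) 0) 0
        norm_num [mk2]
      · show w 1 = -(w 0) * (mk2 (-1) 0) 1
        rw [hw1]; norm_num [mk2]
  · intro hcon
    exact hnot (hcon ⟨1, zero_le_one, v, hmem, (one_smul ℝ v).symm⟩)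
end
/-- Remark 4.2: for the parabola, `(0,-1) ∈ ∂d(∞;S)` but
`(0,-1) ∉ N(∞;S)`; in particular the inclusion `N(∞;S) ⊆ ℝ₊·∂d(∞;S)` is strict. -/
theorem parabola_strict_inclusion (S : Set (EuclideanSpace ℝ (Fin 2)))
    (hS : S = {p : EuclideanSpace ℝ (Fin 2) | p 1 = (p 0)^2})
    (v : EuclideanSpace ℝ (Fin 2)) (hv0 : v 0 = 0) (hv1 : v 1 = -1) :
    v ∈ subInfty (fun p : EuclideanSpace ℝ (Fin 2) => ((Metric.infDist p S : ℝ) : EReal)) ∧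
    v ∉ NormalConeAtInfty S ∧
    NormalConeAtInfty S ⊂
      {w | ∃ t : ℝ, 0 ≤ t ∧ ∃ u ∈ subInfty
        (fun p : EuclideanSpace ℝ (Fin 2) => ((Metric.infDist p S : ℝ) : EReal)), w = t • u} := by
  exact parabola_strict_inclusion' S hS v hv0 hv1
end
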